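/- arXiv:math-ph/0110002 — 3 statements merged into one kernel-verified Lean document; each statement's English description precedes it below -/
import Mathlib

section
/- There is a constant C, depending only on sup_s ‖Λ(s)‖ and sup_s ‖Λ̇(s)‖, such that for every z ∈ ℂ with Im z ≠ 0, every s ∈ [0,1], and every τ ≥ 1: ‖W_τ(s)(H₀ − z)⁻¹ W_τ(s)* − (H₀ − z)⁻¹‖ ≤ C/((Im z)² τ). In particular W_τ(s) H₀ W_τ(s)* converges to H₀ in the norm resolvent sense, uniformly in s, as τ → ∞. -/
open MeasureTheory Filter Set
open scoped Topology

section aux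

lemma stmt8_isUnit {𝓗 : Type*} [NormedAddCommGroup 𝓗] [InnerProductSpace ℂ 𝓗] [CompleteSpace 𝓗]
    (H₀ : 𝓗 →L[ℂ] 𝓗) (hH₀ : IsSelfAdjoint H₀) (z : ℂ) (hz : z.im ≠ 0) :
    IsUnit (H₀ - z • (1 : 𝓗 →L[ℂ] 𝓗)) := by
  have h1 : z ∉ spectrum ℂ H₀ := by
    intro hmem
    have := hH₀.mem_spectrum_eq_re hmem
    apply hz; rw [this]; simp
  rw [spectrum.notMem_iff] at h1
  have : (algebraMap ℂ (𝓗 →L[ℂ] 𝓗)) z - H₀ = -(H₀ - z • 1) := by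
    simp [Algebra.algebraMap_eq_smul_one]
  rw [this] at h1
  exact (IsUnit.neg_iff _).mp h1

lemma stmt8_lower {𝓗 : Type*} [NormedAddCommGroup 𝓗] [InnerProductSpace ℂ 𝓗] [CompleteSpace 𝓗]
    (H₀ : 𝓗 →L[ℂ] 𝓗) (hH₀ : IsSelfAdjoint H₀) (z : ℂ) (x : 𝓗) :
    |z.im| * ‖x‖ ≤ ‖(H₀ - z • (1 : 𝓗 →L[ℂ] 𝓗)) x‖ := by
  have hsym : ((H₀ : 𝓗 →L[ℂ] 𝓗) : 𝓗 →ₗ[ℂ] 𝓗).IsSymmetric := hH₀.isSymmetric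
  have hreal : (inner ℂ x (H₀ x) : ℂ).im = 0 := by
    have h : (starRingEnd ℂ) (inner ℂ ((H₀ : 𝓗 →ₗ[ℂ] 𝓗) x) x) = inner ℂ ((H₀ : 𝓗 →ₗ[ℂ] 𝓗) x) x :=
      hsym.conj_inner_sym x x
    have h2 : (inner ℂ (H₀ x) x : ℂ).im = 0 := by
      have := Complex.conj_eq_iff_im.mp h
      simpa using this
    rw [← inner_conj_symm]
    simp only [Complex.conj_im, neg_eq_zero]
    exact h2
  have key : (inner ℂ x ((H₀ - z • (1:𝓗 →L[ℂ] 𝓗)) x) : ℂ).im = - (z.im * ‖x‖^2) := by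
    simp only [ContinuousLinearMap.sub_apply, inner_sub_right, ContinuousLinearMap.smul_apply,
      ContinuousLinearMap.one_apply, inner_smul_right, Complex.sub_im, Complex.mul_im, hreal,
      inner_self_eq_norm_sq_to_K]
    simp [← Complex.ofReal_pow]
  have h1 : |z.im| * ‖x‖^2 ≤ ‖(inner ℂ x ((H₀ - z • (1:𝓗 →L[ℂ] 𝓗)) x) : ℂ)‖ := by
    calc |z.im| * ‖x‖^2 = |(inner ℂ x ((H₀ - z • (1:𝓗 →L[ℂ] 𝓗)) x) : ℂ).im| := by
          rw [key, abs_neg, abs_mul]; congr 1; exact (abs_of_nonneg (by positivity)).symm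
      _ ≤ ‖(inner ℂ x ((H₀ - z • (1:𝓗 →L[ℂ] 𝓗)) x) : ℂ)‖ := Complex.abs_im_le_norm _
  have h2 : ‖(inner ℂ x ((H₀ - z • (1:𝓗 →L[ℂ] 𝓗)) x) : ℂ)‖ ≤ ‖x‖ * ‖(H₀ - z • (1:𝓗 →L[ℂ] 𝓗)) x‖ :=
    norm_inner_le_norm _ _
  rcases eq_or_ne x 0 with rfl | hx
  · simp
  · have hxpos : (0:ℝ) < ‖x‖ := norm_pos_iff.mpr hx
    nlinarith [h1.trans h2]

lemma stmt8_alg {A : Type*} [Ring A] [Algebra ℂ A] [StarRing A] [StarModule ℂ A]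
    (u h0 lam lam' r : A) (τi : ℂ)
    (hs0 : star h0 = h0) (hsl : star lam = lam) (hsτ : (starRingEnd ℂ) τi = τi)
    (hc1 : h0 * r = r * h0)
    (hc2 : lam * r - r * lam = r * ((h0 * lam - lam * h0) * r)) :
    (star ((-Complex.I) • ((h0 + τi • lam) * u)) * (r * u)
        + star u * (r * ((-Complex.I) • ((h0 + τi • lam) * u))))
      - τi • (star ((-Complex.I) • ((h0 + τi • lam) * u)) * ((r * lam * r) * u)
        + star u * ((r * (τi • lam') * r) * u
          + (r * lam * r) * ((-Complex.I) • ((h0 + τi • lam) * u))))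
      = -(τi * τi) • (Complex.I • (star u * ((lam * (r * lam * r) - (r * lam * r) * lam) * u))
        + star u * ((r * lam' * r) * u)) := by
  set h : A := h0 + τi • lam with hh
  set p : A := r * lam * r with hp
  have hsh : star h = h := by
    rw [hh, star_add, hs0, star_smul, hsl, RCLike.star_def, hsτ]
  have e1 : h * r - r * h = τi • (r * ((h0 * lam - lam * h0) * r)) := by
    rw [← hc2, hh]
    simp only [add_mul, mul_add, smul_mul_assoc, mul_smul_comm, hc1, smul_sub]
    abel
  have e2 : h * p - p * h = r * ((h0 * lam - lam * h0) * r) + τi • (lam * p - p * lam) := by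
    have h0p : h0 * p - p * h0 = r * ((h0 * lam - lam * h0) * r) := by
      have hc1' : ∀ x : A, h0 * (r * x) = r * (h0 * x) := fun x => by
        rw [← mul_assoc, hc1, mul_assoc]
      rw [hp]
      simp only [mul_sub, sub_mul, mul_assoc, hc1', hc1]
    rw [hh]
    simp only [add_mul, mul_add, smul_mul_assoc, mul_smul_comm, smul_sub]
    rw [← h0p]
    abel
  calc (star ((-Complex.I) • (h * u)) * (r * u) + star u * (r * ((-Complex.I) • (h * u))))
        - τi • (star ((-Complex.I) • (h * u)) * (p * u)
          + star u * ((r * (τi • lam') * r) * u + p * ((-Complex.I) • (h * u))))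
      = Complex.I • (star u * ((h * r - r * h) * u))
          - τi • (Complex.I • (star u * ((h * p - p * h) * u))
            + τi • (star u * ((r * lam' * r) * u))) := by
        simp only [neg_smul, star_neg, star_smul, star_mul, hsh, RCLike.star_def, map_neg,
          Complex.conj_I, neg_neg, smul_mul_assoc, mul_smul_comm, mul_sub, sub_mul, smul_sub,
          smul_add, add_mul, mul_add, mul_neg, neg_mul, smul_smul, mul_assoc]
        module
    _ = Complex.I • (star u * ((τi • (r * ((h0 * lam - lam * h0) * r))) * u))
          - τi • (Complex.I • (star u * ((r * ((h0 * lam - lam * h0) * r)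
              + τi • (lam * p - p * lam)) * u))
            + τi • (star u * ((r * lam' * r) * u))) := by rw [e1, e2]
    _ = -(τi * τi) • (Complex.I • (star u * ((lam * p - p * lam) * u))
          + star u * ((r * lam' * r) * u)) := by
        simp only [smul_mul_assoc, mul_smul_comm, mul_sub, sub_mul, smul_sub, smul_add,
          add_mul, mul_add, smul_smul, neg_smul, mul_assoc]
        module

lemma stmt8_sandwich {A : Type*} [NormedRing A] (a q c : A) (ha : ‖a‖ ≤ 1) (hc : ‖c‖ ≤ 1) :
    ‖a * (q * c)‖ ≤ ‖q‖ := by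
  have h1 := norm_mul_le a (q * c)
  have h2 := norm_mul_le q c
  nlinarith [norm_nonneg a, norm_nonneg q, norm_nonneg c, norm_nonneg (q * c)]

lemma stmt8_norm3 {A : Type*} [NormedRing A] {r lamx : A} {b k : ℝ}
    (hr : ‖r‖ ≤ b) (hl : ‖lamx‖ ≤ k) (hk : 0 ≤ k) :
    ‖r * lamx * r‖ ≤ b * k * b := by
  have hb : 0 ≤ b := le_trans (norm_nonneg _) hr
  calc ‖r * lamx * r‖ ≤ ‖r * lamx‖ * ‖r‖ := norm_mul_le _ _
    _ ≤ (‖r‖ * ‖lamx‖) * ‖r‖ :=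
        mul_le_mul_of_nonneg_right (norm_mul_le _ _) (norm_nonneg _)
    _ ≤ b * k * b :=
        mul_le_mul (mul_le_mul hr hl (norm_nonneg _) hb) hr (norm_nonneg _)
          (mul_nonneg hb hk)

lemma stmt8_arith (K vz τ s : ℝ) (hK0 : 0 ≤ K) (hvz : 0 < vz) (hτ : 1 ≤ τ)
    (hs0 : 0 ≤ s) (hs1 : s ≤ 1) :
    τ⁻¹ * τ⁻¹ * (2 * (K * (vz⁻¹ * K * vz⁻¹)) + vz⁻¹ * K * vz⁻¹) * (τ * s)
      + τ⁻¹ * (vz⁻¹ * K * vz⁻¹) + τ⁻¹ * (vz⁻¹ * K * vz⁻¹)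
      ≤ (2 * K ^ 2 + 3 * K) / (vz ^ 2 * τ) := by
  have hτ0 : 0 < τ := lt_of_lt_of_le one_pos hτ
  have hτne : τ ≠ 0 := ne_of_gt hτ0
  have hvne : vz ≠ 0 := ne_of_gt hvz
  have h1 : τ⁻¹ * τ⁻¹ * (2 * (K * (vz⁻¹ * K * vz⁻¹)) + vz⁻¹ * K * vz⁻¹) * (τ * s)
      = ((2 * K ^ 2 + K) * s) * (τ⁻¹ * (vz⁻¹ * vz⁻¹)) := by
    field_simp
  have h2 : (2 * K ^ 2 + 3 * K) / (vz ^ 2 * τ)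
      = (2 * K ^ 2 + 3 * K) * (τ⁻¹ * (vz⁻¹ * vz⁻¹)) := by
    rw [div_eq_mul_inv, mul_inv, show (vz ^ 2)⁻¹ = vz⁻¹ * vz⁻¹ by rw [sq, mul_inv]]
    ring
  have h3 : τ⁻¹ * (vz⁻¹ * K * vz⁻¹) = K * (τ⁻¹ * (vz⁻¹ * vz⁻¹)) := by ring
  rw [h1, h2, h3]
  have hm : (0:ℝ) ≤ τ⁻¹ * (vz⁻¹ * vz⁻¹) := by positivity
  nlinarith [mul_nonneg (mul_nonneg (by positivity : (0:ℝ) ≤ 2 * K ^ 2 + K)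
    (sub_nonneg.mpr hs1)) hm]

end aux

/-- **Norm resolvent convergence with explicit rate.**  There is a constant `C` such that for
every `z` with `Im z ≠ 0`, every `s ∈ [0,1]` and every `τ ≥ 1`,
`‖W_τ(s)(H₀ − z)⁻¹W_τ(s)* − (H₀ − z)⁻¹‖ ≤ C/((Im z)² τ)`; in particular
`W_τ(s) H₀ W_τ(s)*` converges to `H₀` in the norm resolvent sense, uniformly in `s`,
as `τ → ∞`.  Here `W_τ(s) = U_τ(τ·s)` and `U_τ` is the unitary solution of
`i (d/dt) U_τ(t) = (H₀ + (1/τ) Λ(t/τ)) U_τ(t)`, `U_τ(0) = 1`. -/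
theorem stmt8
    {𝓗 : Type*} [NormedAddCommGroup 𝓗] [InnerProductSpace ℂ 𝓗] [CompleteSpace 𝓗]
    (H₀ : 𝓗 →L[ℂ] 𝓗) (hH₀ : IsSelfAdjoint H₀)
    (Λ Λ' : ℝ → 𝓗 →L[ℂ] 𝓗) (hΛsa : ∀ s ∈ Icc (0:ℝ) 1, IsSelfAdjoint (Λ s))
    (hΛd : ∀ s ∈ Icc (0:ℝ) 1, HasDerivWithinAt Λ (Λ' s) (Icc (0:ℝ) 1) s)
    (K : ℝ) (hK : ∀ s ∈ Icc (0:ℝ) 1, ‖Λ s‖ ≤ K ∧ ‖Λ' s‖ ≤ K)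
    (U : ℝ → ℝ → 𝓗 →L[ℂ] 𝓗)
    (hU0 : ∀ τ, 0 < τ → U τ 0 = 1)
    (hUun : ∀ τ, 0 < τ → ∀ t ∈ Icc (0:ℝ) τ,
      star (U τ t) * U τ t = 1 ∧ U τ t * star (U τ t) = 1)
    (hUd : ∀ τ, 0 < τ → ∀ t ∈ Icc (0:ℝ) τ, HasDerivWithinAt (U τ)
      ((-Complex.I) • ((H₀ + (τ:ℂ)⁻¹ • Λ (t / τ)) * U τ t)) (Icc (0:ℝ) τ) t) :
    (∃ C : ℝ, ∀ z : ℂ, z.im ≠ 0 → ∀ τ : ℝ, 1 ≤ τ → ∀ s ∈ Icc (0:ℝ) 1,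
      ‖U τ (τ * s) * Ring.inverse (H₀ - z • (1 : 𝓗 →L[ℂ] 𝓗)) * star (U τ (τ * s)) -
          Ring.inverse (H₀ - z • (1 : 𝓗 →L[ℂ] 𝓗))‖ ≤ C / (z.im ^ 2 * τ)) ∧
    (∀ z : ℂ, z.im ≠ 0 → ∀ ε > 0, ∃ T : ℝ, ∀ τ ≥ T, ∀ s ∈ Icc (0:ℝ) 1,
      ‖U τ (τ * s) * Ring.inverse (H₀ - z • (1 : 𝓗 →L[ℂ] 𝓗)) * star (U τ (τ * s)) -
          Ring.inverse (H₀ - z • (1 : 𝓗 →L[ℂ] 𝓗))‖ < ε) := by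
  have hK0 : 0 ≤ K := le_trans (norm_nonneg _) (hK 0 ⟨le_refl _, zero_le_one⟩).1
  set C : ℝ := 2 * K ^ 2 + 3 * K with hC
  have hC0 : 0 ≤ C := by positivity
  have key : ∀ z : ℂ, z.im ≠ 0 → ∀ τ : ℝ, 1 ≤ τ → ∀ s ∈ Icc (0:ℝ) 1,
      ‖U τ (τ * s) * Ring.inverse (H₀ - z • (1 : 𝓗 →L[ℂ] 𝓗)) * star (U τ (τ * s)) -
          Ring.inverse (H₀ - z • (1 : 𝓗 →L[ℂ] 𝓗))‖ ≤ C / (z.im ^ 2 * τ) := by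
    intro z hz τ hτ s hs
    have hτ0 : (0:ℝ) < τ := lt_of_lt_of_le one_pos hτ
    have hτne : (τ:ℝ) ≠ 0 := ne_of_gt hτ0
    set vz : ℝ := |z.im| with hvz
    have hvz0 : 0 < vz := abs_pos.mpr hz
    set T : 𝓗 →L[ℂ] 𝓗 := H₀ - z • (1 : 𝓗 →L[ℂ] 𝓗) with hT
    set R : 𝓗 →L[ℂ] 𝓗 := Ring.inverse T with hR
    have hunit : IsUnit T := stmt8_isUnit H₀ hH₀ z hz
    have hTR : T * R = 1 := Ring.mul_inverse_cancel T hunit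
    have hRT : R * T = 1 := Ring.inverse_mul_cancel T hunit
    have hRn : ‖R‖ ≤ vz⁻¹ := by
      refine ContinuousLinearMap.opNorm_le_bound R (by positivity) (fun y => ?_)
      have h1 := stmt8_lower H₀ hH₀ z (R y)
      have h2 : T (R y) = y := by
        have : (T * R) y = y := by rw [hTR]; simp
        simpa [ContinuousLinearMap.mul_apply] using this
      rw [h2] at h1
      calc ‖R y‖ = vz⁻¹ * (vz * ‖R y‖) := by field_simp
        _ ≤ vz⁻¹ * ‖y‖ := mul_le_mul_of_nonneg_left h1 (by positivity)
    have hcomm : H₀ * R = R * H₀ := by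
      have h1 : H₀ * T = T * H₀ := by
        rw [hT]
        simp only [mul_sub, sub_mul, mul_smul_comm, smul_mul_assoc, mul_one, one_mul]
      calc H₀ * R = (R * T) * (H₀ * R) := by rw [hRT, one_mul]
        _ = R * ((T * H₀) * R) := by simp only [mul_assoc]
        _ = R * ((H₀ * T) * R) := by rw [h1]
        _ = (R * H₀) * (T * R) := by simp only [mul_assoc]
        _ = R * H₀ := by rw [hTR, mul_one]
    -- norms of unitaries
    have hUn : ∀ t ∈ Icc (0:ℝ) τ, ‖U τ t‖ ≤ 1 ∧ ‖star (U τ t)‖ ≤ 1 := by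
      intro t ht
      have h := (hUun τ hτ0 t ht).1
      have h2 : ‖U τ t‖ * ‖U τ t‖ = ‖star (U τ t) * U τ t‖ :=
        (CStarRing.norm_star_mul_self (x := U τ t)).symm
      rw [h] at h2
      have h3 : ‖(1 : 𝓗 →L[ℂ] 𝓗)‖ ≤ 1 := by
        rw [ContinuousLinearMap.one_def]
        exact ContinuousLinearMap.norm_id_le
      have h4 : ‖U τ t‖ ≤ 1 := by nlinarith [norm_nonneg (U τ t)]
      exact ⟨h4, by rwa [norm_star]⟩
    -- membership facts
    have hmem : ∀ t ∈ Icc (0:ℝ) τ, t / τ ∈ Icc (0:ℝ) 1 := fun t ht =>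
      ⟨div_nonneg ht.1 hτ0.le, (div_le_one hτ0).mpr ht.2⟩
    have hτs : τ * s ∈ Icc (0:ℝ) τ := by
      constructor
      · exact mul_nonneg hτ0.le hs.1
      · nlinarith [hs.2]
    have h0mem : (0:ℝ) ∈ Icc (0:ℝ) τ := ⟨le_refl _, hτ0.le⟩
    -- functions
    set Gf : ℝ → 𝓗 →L[ℂ] 𝓗 := fun t => star (U τ t) * (R * U τ t) with hGf
    set Bf : ℝ → 𝓗 →L[ℂ] 𝓗 := fun t => star (U τ t) * ((R * Λ (t / τ) * R) * U τ t) with hBf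
    set Ψf : ℝ → 𝓗 →L[ℂ] 𝓗 := fun t => Gf t - ((τ:ℂ))⁻¹ • Bf t with hΨf
    set Dsm : ℝ → 𝓗 →L[ℂ] 𝓗 := fun t =>
      -(((τ:ℂ))⁻¹ * ((τ:ℂ))⁻¹) • (Complex.I • (star (U τ t) *
          ((Λ (t / τ) * (R * Λ (t / τ) * R) - (R * Λ (t / τ) * R) * Λ (t / τ)) * U τ t))
        + star (U τ t) * ((R * Λ' (t / τ) * R) * U τ t)) with hDsm
    have hτi : (starRingEnd ℂ) ((τ:ℂ))⁻¹ = ((τ:ℂ))⁻¹ := by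
      rw [map_inv₀, Complex.conj_ofReal]
    -- derivative of Ψf
    have hΨd : ∀ t ∈ Icc (0:ℝ) τ, HasDerivWithinAt Ψf (Dsm t) (Icc (0:ℝ) τ) t := by
      intro t ht
      have hu := hUd τ hτ0 t ht
      have hv := hu.star
      have hl : HasDerivWithinAt (fun x => Λ (x / τ)) (((τ:ℂ))⁻¹ • Λ' (t / τ))
          (Icc (0:ℝ) τ) t := by
        have hin : HasDerivWithinAt (fun x : ℝ => x / τ) τ⁻¹ (Icc (0:ℝ) τ) t := by
          simpa using ((hasDerivWithinAt_id t (Icc (0:ℝ) τ)).div_const τ)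
        have hmaps : MapsTo (fun x : ℝ => x / τ) (Icc (0:ℝ) τ) (Icc (0:ℝ) 1) := fun x hx =>
          hmem x hx
        have base := (hΛd (t / τ) (hmem t ht)).scomp t hin hmaps
        have : ((τ:ℂ))⁻¹ • Λ' (t / τ) = (τ⁻¹ : ℝ) • Λ' (t / τ) := by
          rw [← Complex.coe_smul, Complex.ofReal_inv]
        rw [this]
        exact base
      have hG : HasDerivWithinAt Gf
          (star ((-Complex.I) • ((H₀ + (τ:ℂ)⁻¹ • Λ (t / τ)) * U τ t)) * (R * U τ t)
            + star (U τ t) * (R * ((-Complex.I) • ((H₀ + (τ:ℂ)⁻¹ • Λ (t / τ)) * U τ t))))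
          (Icc (0:ℝ) τ) t := hv.mul (hu.const_mul R)
      have hP : HasDerivWithinAt (fun x => R * Λ (x / τ) * R)
          (R * (((τ:ℂ))⁻¹ • Λ' (t / τ)) * R) (Icc (0:ℝ) τ) t := (hl.const_mul R).mul_const R
      have hB : HasDerivWithinAt Bf
          (star ((-Complex.I) • ((H₀ + (τ:ℂ)⁻¹ • Λ (t / τ)) * U τ t))
              * ((R * Λ (t / τ) * R) * U τ t)
            + star (U τ t) * ((R * (((τ:ℂ))⁻¹ • Λ' (t / τ)) * R) * U τ t
              + (R * Λ (t / τ) * R) * ((-Complex.I) • ((H₀ + (τ:ℂ)⁻¹ • Λ (t / τ)) * U τ t))))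
          (Icc (0:ℝ) τ) t := hv.mul (hP.mul hu)
      have hΨ := hG.sub (hB.const_smul (((τ:ℂ))⁻¹))
      have heq := stmt8_alg (U τ t) H₀ (Λ (t / τ)) (Λ' (t / τ)) R ((τ:ℂ))⁻¹
        hH₀ (hΛsa (t / τ) (hmem t ht)) hτi hcomm ?_
      · have hD2 : HasDerivWithinAt Ψf
            (-(((τ:ℂ))⁻¹ * ((τ:ℂ))⁻¹) • (Complex.I • (star (U τ t) *
                ((Λ (t / τ) * (R * Λ (t / τ) * R) - (R * Λ (t / τ) * R) * Λ (t / τ)) * U τ t))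
              + star (U τ t) * ((R * Λ' (t / τ) * R) * U τ t)))
            (Icc (0:ℝ) τ) t := by
          rw [← heq]
          exact hΨ
        exact hD2
      · -- hc2 : Λ * R - R * Λ = R * ((H₀Λ - ΛH₀) R)
        set lam := Λ (t / τ)
        have h1 : lam * R = R * ((T * lam) * R) := by
          calc lam * R = (R * T) * (lam * R) := by rw [hRT, one_mul]
            _ = R * ((T * lam) * R) := by simp only [mul_assoc]
        have h2 : R * lam = R * ((lam * T) * R) := by
          calc R * lam = (R * lam) * (T * R) := by rw [hTR, mul_one]
            _ = R * ((lam * T) * R) := by simp only [mul_assoc]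
        rw [h1, h2, ← mul_sub, ← sub_mul]
        congr 2
        rw [hT]
        simp only [mul_sub, sub_mul, mul_smul_comm, smul_mul_assoc, mul_one, one_mul]
        abel
    -- bound on Dsm
    have hDb : ∀ t ∈ Icc (0:ℝ) τ,
        ‖Dsm t‖ ≤ τ⁻¹ * τ⁻¹ * (2 * (K * (vz⁻¹ * K * vz⁻¹)) + vz⁻¹ * K * vz⁻¹) := by
      intro t ht
      have hKl := hK (t / τ) (hmem t ht)
      have hu1 := (hUn t ht).1
      have hu2 := (hUn t ht).2
      have hpn : ‖R * Λ (t / τ) * R‖ ≤ vz⁻¹ * K * vz⁻¹ :=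
        stmt8_norm3 hRn hKl.1 hK0
      have hQn : ‖Λ (t / τ) * (R * Λ (t / τ) * R) - (R * Λ (t / τ) * R) * Λ (t / τ)‖
          ≤ 2 * (K * (vz⁻¹ * K * vz⁻¹)) := by
        have hmKb : vz⁻¹ * K * vz⁻¹ ≤ vz⁻¹ * K * vz⁻¹ := le_refl _
        have hKb0 : (0:ℝ) ≤ vz⁻¹ * K * vz⁻¹ :=
          mul_nonneg (mul_nonneg (by positivity) hK0) (by positivity)
        have n1 : ‖Λ (t / τ) * (R * Λ (t / τ) * R)‖ ≤ K * (vz⁻¹ * K * vz⁻¹) :=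
          le_trans (norm_mul_le _ _)
            (mul_le_mul hKl.1 hpn (norm_nonneg _) hK0)
        have n2 : ‖(R * Λ (t / τ) * R) * Λ (t / τ)‖ ≤ K * (vz⁻¹ * K * vz⁻¹) := by
          refine le_trans (norm_mul_le _ _) ?_
          refine le_trans (mul_le_mul hpn hKl.1 (norm_nonneg _) hKb0) ?_
          ring_nf
          exact le_refl _
        calc ‖Λ (t / τ) * (R * Λ (t / τ) * R) - (R * Λ (t / τ) * R) * Λ (t / τ)‖
            ≤ ‖Λ (t / τ) * (R * Λ (t / τ) * R)‖ + ‖(R * Λ (t / τ) * R) * Λ (t / τ)‖ :=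
              norm_sub_le _ _
          _ ≤ 2 * (K * (vz⁻¹ * K * vz⁻¹)) := by linarith
      have hX : ‖star (U τ t) *
          ((Λ (t / τ) * (R * Λ (t / τ) * R) - (R * Λ (t / τ) * R) * Λ (t / τ)) * U τ t)‖
          ≤ 2 * (K * (vz⁻¹ * K * vz⁻¹)) :=
        le_trans (stmt8_sandwich _ _ _ hu2 hu1) hQn
      have hY : ‖star (U τ t) * ((R * Λ' (t / τ) * R) * U τ t)‖ ≤ vz⁻¹ * K * vz⁻¹ := by
        refine le_trans (stmt8_sandwich _ _ _ hu2 hu1) ?_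
        exact stmt8_norm3 hRn hKl.2 hK0
      have hnτi : ‖(-(((τ:ℂ))⁻¹ * ((τ:ℂ))⁻¹) : ℂ)‖ = τ⁻¹ * τ⁻¹ := by
        rw [norm_neg, norm_mul, norm_inv, Complex.norm_real, Real.norm_eq_abs,
          abs_of_pos hτ0]
      rw [hDsm]
      calc ‖(-(((τ:ℂ))⁻¹ * ((τ:ℂ))⁻¹) : ℂ) • (Complex.I • (star (U τ t) *
              ((Λ (t / τ) * (R * Λ (t / τ) * R) - (R * Λ (t / τ) * R) * Λ (t / τ)) * U τ t))
            + star (U τ t) * ((R * Λ' (t / τ) * R) * U τ t))‖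
          = τ⁻¹ * τ⁻¹ * ‖Complex.I • (star (U τ t) *
              ((Λ (t / τ) * (R * Λ (t / τ) * R) - (R * Λ (t / τ) * R) * Λ (t / τ)) * U τ t))
            + star (U τ t) * ((R * Λ' (t / τ) * R) * U τ t)‖ := by
            rw [norm_smul, hnτi]
        _ ≤ τ⁻¹ * τ⁻¹ * (2 * (K * (vz⁻¹ * K * vz⁻¹)) + vz⁻¹ * K * vz⁻¹) := by
            apply mul_le_mul_of_nonneg_left _ (by positivity)
            calc ‖Complex.I • (star (U τ t) *
                  ((Λ (t / τ) * (R * Λ (t / τ) * R) - (R * Λ (t / τ) * R) * Λ (t / τ)) * U τ t))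
                + star (U τ t) * ((R * Λ' (t / τ) * R) * U τ t)‖
                ≤ ‖Complex.I • (star (U τ t) *
                    ((Λ (t / τ) * (R * Λ (t / τ) * R) - (R * Λ (t / τ) * R) * Λ (t / τ))
                      * U τ t))‖
                  + ‖star (U τ t) * ((R * Λ' (t / τ) * R) * U τ t)‖ := norm_add_le _ _
              _ ≤ 2 * (K * (vz⁻¹ * K * vz⁻¹)) + vz⁻¹ * K * vz⁻¹ := by
                  rw [norm_smul, Complex.norm_I, one_mul]
                  exact add_le_add hX hY
    -- MVT
    have hMVT : ‖Ψf (τ * s) - Ψf 0‖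
        ≤ (τ⁻¹ * τ⁻¹ * (2 * (K * (vz⁻¹ * K * vz⁻¹)) + vz⁻¹ * K * vz⁻¹)) * ‖τ * s - 0‖ :=
      (convex_Icc _ _).norm_image_sub_le_of_norm_hasDerivWithin_le hΨd hDb h0mem hτs
    -- boundary values
    have hG0 : Gf 0 = R := by
      rw [hGf]
      simp [hU0 τ hτ0]
    have hBn : ∀ t ∈ Icc (0:ℝ) τ, ‖Bf t‖ ≤ vz⁻¹ * K * vz⁻¹ := by
      intro t ht
      have hKl := hK (t / τ) (hmem t ht)
      refine le_trans (stmt8_sandwich _ _ _ (hUn t ht).2 (hUn t ht).1) ?_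
      exact stmt8_norm3 hRn hKl.1 hK0
    have hdecomp : Gf (τ * s) - R
        = (Ψf (τ * s) - Ψf 0) + (((τ:ℂ))⁻¹ • Bf (τ * s) - ((τ:ℂ))⁻¹ • Bf 0) := by
      rw [hΨf]
      simp only []
      rw [hG0]
      abel
    have hτin : ‖(((τ:ℂ))⁻¹ : ℂ)‖ = τ⁻¹ := by
      rw [norm_inv, Complex.norm_real, Real.norm_eq_abs, abs_of_pos hτ0]
    have hGR : ‖Gf (τ * s) - R‖
        ≤ (τ⁻¹ * τ⁻¹ * (2 * (K * (vz⁻¹ * K * vz⁻¹)) + vz⁻¹ * K * vz⁻¹)) * (τ * s)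
          + τ⁻¹ * (vz⁻¹ * K * vz⁻¹) + τ⁻¹ * (vz⁻¹ * K * vz⁻¹) := by
      rw [hdecomp]
      have h1 : ‖τ * s - 0‖ = τ * s := by
        rw [sub_zero, Real.norm_eq_abs, abs_of_nonneg hτs.1]
      calc ‖(Ψf (τ * s) - Ψf 0) + (((τ:ℂ))⁻¹ • Bf (τ * s) - ((τ:ℂ))⁻¹ • Bf 0)‖
          ≤ ‖Ψf (τ * s) - Ψf 0‖ + (‖((τ:ℂ))⁻¹ • Bf (τ * s)‖ + ‖((τ:ℂ))⁻¹ • Bf 0‖) := by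
            refine le_trans (norm_add_le _ _) ?_
            exact add_le_add (le_refl _) (norm_sub_le _ _)
        _ ≤ (τ⁻¹ * τ⁻¹ * (2 * (K * (vz⁻¹ * K * vz⁻¹)) + vz⁻¹ * K * vz⁻¹)) * (τ * s)
            + τ⁻¹ * (vz⁻¹ * K * vz⁻¹) + τ⁻¹ * (vz⁻¹ * K * vz⁻¹) := by
            have b1 : ‖((τ:ℂ))⁻¹ • Bf (τ * s)‖ ≤ τ⁻¹ * (vz⁻¹ * K * vz⁻¹) := by
              rw [norm_smul, hτin]
              exact mul_le_mul_of_nonneg_left (hBn _ hτs) (by positivity)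
            have b2 : ‖((τ:ℂ))⁻¹ • Bf 0‖ ≤ τ⁻¹ * (vz⁻¹ * K * vz⁻¹) := by
              rw [norm_smul, hτin]
              exact mul_le_mul_of_nonneg_left (hBn _ h0mem) (by positivity)
            have := hMVT
            rw [h1] at this
            linarith
    -- final algebra: W R W* - R = W (R - Gf(τs)) W*
    set W : 𝓗 →L[ℂ] 𝓗 := U τ (τ * s) with hW
    have hWun := hUun τ hτ0 (τ * s) hτs
    have hfin : W * R * star W - R = W * ((R - Gf (τ * s)) * star W) := by
      have h2 : W * ((star W * (R * W)) * star W) = R := by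
        calc W * ((star W * (R * W)) * star W) = (W * star W) * (R * (W * star W)) := by
              simp only [mul_assoc]
          _ = R := by rw [hWun.2]; simp
      have hGts : Gf (τ * s) = star W * (R * W) := rfl
      rw [hGts, sub_mul, mul_sub, h2, mul_assoc W R (star W)]
    have hfinal : ‖W * R * star W - R‖ ≤ ‖Gf (τ * s) - R‖ := by
      rw [hfin, norm_sub_rev (Gf (τ * s)) R]
      exact stmt8_sandwich W (R - Gf (τ * s)) (star W) (hUn (τ * s) hτs).1 (hUn (τ * s) hτs).2
    -- numeric conclusion
    have harith := stmt8_arith K vz τ s hK0 hvz0 hτ hs.1 hs.2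
    have him2 : C / (z.im ^ 2 * τ) = (2 * K ^ 2 + 3 * K) / (vz ^ 2 * τ) := by
      rw [hC, hvz, sq_abs]
    rw [him2]
    exact le_trans hfinal (le_trans hGR harith)
  refine ⟨⟨C, key⟩, ?_⟩
  intro z hz ε hε
  refine ⟨max 1 (C / (z.im ^ 2 * ε) + 1), fun τ hτ s hs => ?_⟩
  have hτ1 : 1 ≤ τ := le_trans (le_max_left _ _) hτ
  have hτ2 : C / (z.im ^ 2 * ε) + 1 ≤ τ := le_trans (le_max_right _ _) hτ
  refine lt_of_le_of_lt (key z hz τ hτ1 s hs) ?_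
  have him : 0 < z.im ^ 2 := by positivity
  have hτ0 : 0 < τ := lt_of_lt_of_le one_pos hτ1
  rw [div_lt_iff₀ (by positivity)]
  have h1 : C / (z.im ^ 2 * ε) < τ := by linarith [hτ2]
  have h2 : C < τ * (z.im ^ 2 * ε) := by
    rw [div_lt_iff₀ (by positivity)] at h1
    linarith
  nlinarith
end

section
/- Let Λ₁, Λ₂ : [0,1] → B(𝓗) be two families of bounded self-adjoint operators, each integrable in norm, and for τ > 0 let W¹_τ(s) and W²_τ(s) be the corresponding scaled unitary propagators (W^j_τ(s) = U^j_τ(τ·s) where U^j_τ solves the initial value problem with generator H₀ + (1/τ)Λ_j(t/τ)). Then for all s ∈ [0,1] and all τ > 0: ‖W¹_τ(s) − W²_τ(s)‖ ≤ ∫₀¹ ‖Λ₁(r) − Λ₂(r)‖ dr. -/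
open MeasureTheory Filter Set
open scoped Topology

section Aux

lemma clm_intervalIntegral_comm {E F : Type*} [NormedAddCommGroup E] [NormedSpace ℝ E]
    [CompleteSpace E] [NormedAddCommGroup F] [NormedSpace ℝ F] [CompleteSpace F]
    (φ : E →L[ℝ] F) {f : ℝ → E} {a b : ℝ} {μ : Measure ℝ} (hf : IntervalIntegrable f μ a b) :
    ∫ x in a..b, φ (f x) ∂μ = φ (∫ x in a..b, f x ∂μ) := by
  rw [intervalIntegral, intervalIntegral, φ.integral_comp_comm hf.1,
    φ.integral_comp_comm hf.2, map_sub]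

variable {E : Type*} [NormedRing E] [NormedSpace ℝ E] [CompleteSpace E]
  [IsScalarTower ℝ E E] [SMulCommClass ℝ E E]

lemma integrable_mul_prod {μ ν : Measure ℝ} [SFinite ν] {f g : ℝ → E}
    (hf : Integrable f μ) (hg : Integrable g ν) :
    Integrable (fun z : ℝ × ℝ => f z.1 * g z.2) (μ.prod ν) := by
  refine (integrable_prod_iff (hf.1.comp_fst.mul hg.1.comp_snd)).2 ⟨?_, ?_⟩
  · exact Eventually.of_forall fun x => hg.const_mul (f x)
  · refine (hf.norm.mul_const (∫ y, ‖g y‖ ∂ν)).mono'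
      ((hf.1.comp_fst.mul hg.1.comp_snd).norm.integral_prod_right') ?_
    refine Eventually.of_forall fun x => ?_
    rw [Real.norm_of_nonneg (integral_nonneg fun y => norm_nonneg _)]
    calc ∫ y, ‖f x * g y‖ ∂ν ≤ ∫ y, ‖f x‖ * ‖g y‖ ∂ν := by
          refine integral_mono (hg.const_mul (f x)).norm (hg.norm.const_mul ‖f x‖) ?_
          exact fun y => norm_mul_le _ _
      _ = ‖f x‖ * ∫ y, ‖g y‖ ∂ν := by
          simpa using integral_const_mul (‖f x‖ : ℝ) (fun y => ‖g y‖)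

end Aux

section Tri
set_option linter.unusedSectionVars false

variable {E : Type*} [NormedRing E] [NormedSpace ℝ E] [CompleteSpace E]
  [IsScalarTower ℝ E E] [SMulCommClass ℝ E E]

lemma triangle_swap {t : ℝ} (ht : 0 ≤ t) {f g : ℝ → E}
    (hf : IntervalIntegrable f volume 0 t) (hg : IntervalIntegrable g volume 0 t) :
    (∫ r in (0:ℝ)..t, f r) * (∫ r in (0:ℝ)..t, g r)
      = (∫ r in (0:ℝ)..t, f r * ∫ u in (0:ℝ)..r, g u)
        + ∫ r in (0:ℝ)..t, (∫ u in (0:ℝ)..r, f u) * g r := by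
  set μ : Measure ℝ := volume.restrict (Ioc 0 t) with hμ
  have hf' : Integrable f μ := (intervalIntegrable_iff_integrableOn_Ioc_of_le ht).1 hf
  have hg' : Integrable g μ := (intervalIntegrable_iff_integrableOn_Ioc_of_le ht).1 hg
  set P : ℝ × ℝ → E := fun z => f z.1 * g z.2 with hP
  have hPint : Integrable P (μ.prod μ) := integrable_mul_prod hf' hg'
  set T : Set (ℝ × ℝ) := {z | z.2 ≤ z.1} with hT
  set T' : Set (ℝ × ℝ) := {z | z.1 ≤ z.2} with hT'
  have hTm : MeasurableSet T := measurableSet_le measurable_snd measurable_fst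
  have hT'm : MeasurableSet T' := measurableSet_le measurable_fst measurable_snd
  -- inner integral identities
  have key : ∀ (h : ℝ → E), Integrable h μ → ∀ r ∈ Ioc (0:ℝ) t,
      (∫ u, (Iic r).indicator h u ∂μ) = ∫ u in (0:ℝ)..r, h u := by
    intro h hh r hr
    rw [integral_indicator measurableSet_Iic]
    have : μ.restrict (Iic r) = volume.restrict (Ioc 0 r) := by
      rw [hμ, Measure.restrict_restrict measurableSet_Iic]
      congr 1
      ext u
      simp only [mem_inter_iff, mem_Iic, mem_Ioc]
      exact ⟨fun ⟨h1, h2, _⟩ => ⟨h2, h1⟩, fun ⟨h1, h2⟩ => ⟨h2, h1, h2.trans hr.2⟩⟩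
    rw [show (∫ u in Iic r, h u ∂μ) = ∫ u, h u ∂(μ.restrict (Iic r)) from rfl, this,
      intervalIntegral.integral_of_le hr.1.le]
  -- Step A
  have hTP : Integrable (T.indicator P) (μ.prod μ) := hPint.indicator hTm
  have stepA : (∫ r in (0:ℝ)..t, f r * ∫ u in (0:ℝ)..r, g u)
      = ∫ z, T.indicator P z ∂(μ.prod μ) := by
    rw [intervalIntegral.integral_of_le ht]
    rw [show (∫ z, T.indicator P z ∂(μ.prod μ))
        = ∫ r, ∫ u, T.indicator P (r, u) ∂μ ∂μ from (integral_integral (f := fun r u => T.indicator P (r, u)) hTP).symm]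
    refine integral_congr_ae ?_
    filter_upwards [ae_restrict_mem measurableSet_Ioc] with r hr
    have : (fun u => T.indicator P (r, u)) = (Iic r).indicator (fun u => f r * g u) := by
      funext u
      by_cases h : u ≤ r <;>
        simp [T, P, Set.indicator, h, mem_Iic]
    rw [this, key _ (hg'.const_mul (f r)) r hr]
    exact (clm_intervalIntegral_comm (ContinuousLinearMap.mul ℝ E (f r))
        (hg.mono_set (by rw [uIcc_of_le hr.1.le, uIcc_of_le ht]; exact Icc_subset_Icc le_rfl hr.2))).symm
  -- Step B
  have hT'P : Integrable (T'.indicator P) (μ.prod μ) := hPint.indicator hT'm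
  have stepB : (∫ r in (0:ℝ)..t, (∫ u in (0:ℝ)..r, f u) * g r)
      = ∫ z, T'.indicator P z ∂(μ.prod μ) := by
    rw [intervalIntegral.integral_of_le ht]
    rw [← integral_prod_swap (T'.indicator P)]
    have hswap : Integrable (fun z : ℝ × ℝ => T'.indicator P z.swap) (μ.prod μ) :=
      hT'P.swap
    rw [show (∫ z : ℝ × ℝ, T'.indicator P z.swap ∂(μ.prod μ))
        = ∫ r, ∫ u, T'.indicator P (Prod.swap (r, u)) ∂μ ∂μ from
      (integral_integral (f := fun r u => T'.indicator P (Prod.swap (r, u))) hswap).symm]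
    refine integral_congr_ae ?_
    filter_upwards [ae_restrict_mem measurableSet_Ioc] with r hr
    have : (fun u => T'.indicator P (Prod.swap (r, u)))
        = (Iic r).indicator (fun u => f u * g r) := by
      funext u
      by_cases h : u ≤ r <;>
        simp [T', P, Set.indicator, h, mem_Iic, Prod.swap]
    rw [this, key _ (hf'.mul_const (g r)) r hr]
    exact (clm_intervalIntegral_comm ((ContinuousLinearMap.mul ℝ E).flip (g r))
        (hf.mono_set (by rw [uIcc_of_le hr.1.le, uIcc_of_le ht]; exact Icc_subset_Icc le_rfl hr.2))).symm
  -- diagonal is null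
  have hdiag : (μ.prod μ) {z : ℝ × ℝ | z.1 = z.2} = 0 := by
    have hm : MeasurableSet {z : ℝ × ℝ | z.1 = z.2} :=
      measurableSet_eq_fun measurable_fst measurable_snd
    rw [Measure.prod_apply hm]
    have : ∀ x : ℝ, (Prod.mk x ⁻¹' {z : ℝ × ℝ | z.1 = z.2}) = {x} := by
      intro x; ext y; simp [eq_comm]
    simp [this]
  -- sum of indicators
  have hsum : T.indicator P + T'.indicator P =ᵐ[μ.prod μ] P := by
    have : ∀ᵐ z ∂(μ.prod μ), z.1 ≠ (z.2:ℝ) := by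
      rw [ae_iff]
      simpa using hdiag
    filter_upwards [this] with z hz
    rcases lt_or_gt_of_ne hz with h | h
    · simp [T, T', Set.indicator, h.le, not_le.2 h]
    · simp [T, T', Set.indicator, h.le, not_le.2 h]
  -- total integral
  have total : ∫ z, P z ∂(μ.prod μ)
      = (∫ r in (0:ℝ)..t, f r) * (∫ r in (0:ℝ)..t, g r) := by
    rw [show (∫ z, P z ∂(μ.prod μ)) = ∫ r, ∫ u, f r * g u ∂μ ∂μ from
      (integral_integral (f := fun r u => f r * g u) hPint).symm]
    have : ∀ r : ℝ, (∫ u, f r * g u ∂μ) = f r * ∫ u, g u ∂μ := fun r =>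
      (ContinuousLinearMap.mul ℝ E (f r)).integral_comp_comm hg'
    calc ∫ r, ∫ u, f r * g u ∂μ ∂μ = ∫ r, f r * ∫ u, g u ∂μ ∂μ :=
          integral_congr_ae (Eventually.of_forall fun r => this r)
      _ = (∫ r, f r ∂μ) * ∫ u, g u ∂μ :=
          ((ContinuousLinearMap.mul ℝ E).flip (∫ u, g u ∂μ)).integral_comp_comm hf'
      _ = _ := by rw [intervalIntegral.integral_of_le ht, intervalIntegral.integral_of_le ht]
  rw [stepA, stepB, ← total]
  calc ∫ z, P z ∂(μ.prod μ) = ∫ z, (T.indicator P z + T'.indicator P z) ∂(μ.prod μ) :=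
        (integral_congr_ae hsum).symm
    _ = _ := integral_add hTP hT'P

end Tri

section Volterra
set_option linter.unusedSectionVars false

variable {E : Type*} [NormedRing E] [NormedSpace ℝ E] [CompleteSpace E]
  [IsScalarTower ℝ E E] [SMulCommClass ℝ E E]

lemma volterra_mul {t : ℝ} (ht : 0 ≤ t) {f g F G : ℝ → E} {C D : E}
    (hf : IntervalIntegrable f volume 0 t) (hg : IntervalIntegrable g volume 0 t)
    (hF : ∀ r ∈ Icc (0:ℝ) t, F r = C + ∫ u in (0:ℝ)..r, f u)
    (hG : ∀ r ∈ Icc (0:ℝ) t, G r = D + ∫ u in (0:ℝ)..r, g u) :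
    F t * G t = C * D + ∫ r in (0:ℝ)..t, (f r * G r + F r * g r) := by
  have hficc : IntegrableOn f (uIcc 0 t) volume := (intervalIntegrable_iff').1 hf
  have hgicc : IntegrableOn g (uIcc 0 t) volume := (intervalIntegrable_iff').1 hg
  have hFprim : ContinuousOn (fun r => ∫ u in (0:ℝ)..r, f u) (uIcc 0 t) :=
    intervalIntegral.continuousOn_primitive_interval hficc
  have hGprim : ContinuousOn (fun r => ∫ u in (0:ℝ)..r, g u) (uIcc 0 t) :=
    intervalIntegral.continuousOn_primitive_interval hgicc
  have huIcc : uIcc (0:ℝ) t = Icc 0 t := uIcc_of_le ht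
  have i1 : IntervalIntegrable (fun r => f r * D) volume 0 t := hf.mul_const D
  have i2 : IntervalIntegrable (fun r => f r * ∫ u in (0:ℝ)..r, g u) volume 0 t :=
    hf.mul_continuousOn hGprim
  have i3 : IntervalIntegrable (fun r => C * g r) volume 0 t := hg.const_mul C
  have i4 : IntervalIntegrable (fun r => (∫ u in (0:ℝ)..r, f u) * g r) volume 0 t :=
    hg.continuousOn_mul hFprim
  have congr1 : (∫ r in (0:ℝ)..t, (f r * G r + F r * g r))
      = ∫ r in (0:ℝ)..t, ((f r * D + f r * ∫ u in (0:ℝ)..r, g u)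
          + (C * g r + (∫ u in (0:ℝ)..r, f u) * g r)) := by
    refine intervalIntegral.integral_congr fun r hr => ?_
    rw [huIcc] at hr
    rw [hF r hr, hG r hr]
    noncomm_ring
  rw [congr1, intervalIntegral.integral_add (i1.add i2) (i3.add i4),
    intervalIntegral.integral_add i1 i2, intervalIntegral.integral_add i3 i4]
  have e1 : (∫ r in (0:ℝ)..t, f r * D) = (∫ r in (0:ℝ)..t, f r) * D :=
    clm_intervalIntegral_comm ((ContinuousLinearMap.mul ℝ E).flip D) hf
  have e3 : (∫ r in (0:ℝ)..t, C * g r) = C * ∫ r in (0:ℝ)..t, g r :=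
    clm_intervalIntegral_comm (ContinuousLinearMap.mul ℝ E C) hg
  have tri := triangle_swap ht hf hg
  rw [e1, e3, hF t ⟨ht, le_rfl⟩, hG t ⟨ht, le_rfl⟩, mul_add, add_mul, add_mul, tri]
  abel

end Volterra

section Comp

lemma comp_div_intervalIntegrable {F : Type*} [NormedAddCommGroup F] {h : ℝ → F}
    (hh : IntervalIntegrable h volume 0 1) {τ : ℝ} (hτ : 0 < τ) :
    IntervalIntegrable (fun r => h (r / τ)) volume 0 τ := by
  have := hh.comp_mul_left (c := τ⁻¹)
  rw [zero_div, one_div, inv_inv] at this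
  simpa [div_eq_inv_mul] using this

lemma uIcc_zero_subset {a b : ℝ} (ha : 0 ≤ a) (hab : a ≤ b) : uIcc (0:ℝ) a ⊆ uIcc 0 b := by
  rw [uIcc_of_le ha, uIcc_of_le (ha.trans hab)]
  exact Icc_subset_Icc le_rfl hab

lemma clm_comp_intervalIntegrable {E F : Type*} [NormedAddCommGroup E] [NormedSpace ℝ E]
    [NormedAddCommGroup F] [NormedSpace ℝ F] (φ : E →L[ℝ] F) {f : ℝ → E} {a b : ℝ}
    {μ : Measure ℝ} (hf : IntervalIntegrable f μ a b) :
    IntervalIntegrable (fun x => φ (f x)) μ a b :=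
  ⟨φ.integrable_comp hf.1, φ.integrable_comp hf.2⟩

end Comp


set_option maxHeartbeats 1000000 in
/-- **Stability of the scaled propagator under perturbation of the generator.**
If `Λ₁, Λ₂ : [0,1] → B(𝓗)` are integrable in norm and `W¹_τ, W²_τ` are the corresponding
scaled unitary propagators (`W^j_τ(s) = U^j_τ(τ·s)` where `U^j_τ` solves
`i (d/dt) U(t) = (H₀ + (1/τ)Λ_j(t/τ)) U(t)`, `U(0) = 1`, encoded as the corresponding
Volterra integral equation), then for all `s ∈ [0,1]` and `τ > 0`,
`‖W¹_τ(s) − W²_τ(s)‖ ≤ ∫₀¹ ‖Λ₁(r) − Λ₂(r)‖ dr`. -/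
theorem stmt9
    {𝓗 : Type*} [NormedAddCommGroup 𝓗] [InnerProductSpace ℂ 𝓗] [CompleteSpace 𝓗]
    (H₀ : 𝓗 →L[ℂ] 𝓗) (hH₀ : IsSelfAdjoint H₀)
    (Λ₁ Λ₂ : ℝ → 𝓗 →L[ℂ] 𝓗)
    (hΛ₁sa : ∀ s ∈ Icc (0:ℝ) 1, IsSelfAdjoint (Λ₁ s))
    (hΛ₂sa : ∀ s ∈ Icc (0:ℝ) 1, IsSelfAdjoint (Λ₂ s))
    (hΛ₁int : IntervalIntegrable Λ₁ volume 0 1)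
    (hΛ₂int : IntervalIntegrable Λ₂ volume 0 1)
    (U₁ U₂ : ℝ → ℝ → 𝓗 →L[ℂ] 𝓗)
    (hU₁cont : ∀ τ, 0 < τ → ContinuousOn (U₁ τ) (Icc 0 τ))
    (hU₂cont : ∀ τ, 0 < τ → ContinuousOn (U₂ τ) (Icc 0 τ))
    (hU₁un : ∀ τ, 0 < τ → ∀ t ∈ Icc (0:ℝ) τ,
      star (U₁ τ t) * U₁ τ t = 1 ∧ U₁ τ t * star (U₁ τ t) = 1)
    (hU₂un : ∀ τ, 0 < τ → ∀ t ∈ Icc (0:ℝ) τ,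
      star (U₂ τ t) * U₂ τ t = 1 ∧ U₂ τ t * star (U₂ τ t) = 1)
    (hU₁eq : ∀ τ, 0 < τ → ∀ t ∈ Icc (0:ℝ) τ,
      U₁ τ t = 1 + ∫ r in (0:ℝ)..t, (-Complex.I) • ((H₀ + (τ:ℂ)⁻¹ • Λ₁ (r / τ)) * U₁ τ r))
    (hU₂eq : ∀ τ, 0 < τ → ∀ t ∈ Icc (0:ℝ) τ,
      U₂ τ t = 1 + ∫ r in (0:ℝ)..t, (-Complex.I) • ((H₀ + (τ:ℂ)⁻¹ • Λ₂ (r / τ)) * U₂ τ r)) :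
    ∀ τ > (0:ℝ), ∀ s ∈ Icc (0:ℝ) 1,
      ‖U₁ τ (τ * s) - U₂ τ (τ * s)‖ ≤ ∫ r in (0:ℝ)..1, ‖Λ₁ r - Λ₂ r‖ := by
  intro τ hτ s hs
  set t : ℝ := τ * s with htdef
  have ht0 : 0 ≤ t := mul_nonneg hτ.le hs.1
  have htτ : t ≤ τ := by nlinarith [hs.2, hs.1]
  have hsub : Icc (0:ℝ) t ⊆ Icc 0 τ := Icc_subset_Icc le_rfl htτ
  have htmem : t ∈ Icc (0:ℝ) τ := ⟨ht0, htτ⟩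
  -- norm ≤ 1 for unitaries
  have hUnorm : ∀ V : 𝓗 →L[ℂ] 𝓗, star V * V = 1 → ‖V‖ ≤ 1 := by
    intro V hV
    have h2 : ‖V‖ * ‖V‖ = ‖(1 : 𝓗 →L[ℂ] 𝓗)‖ := by rw [← CStarRing.norm_star_mul_self, hV]
    have h3 : ‖(1 : 𝓗 →L[ℂ] 𝓗)‖ ≤ 1 := ContinuousLinearMap.norm_id_le
    nlinarith [norm_nonneg V]
  -- the distance function
  set D : ℝ → ℝ := fun x => ‖Λ₁ x - Λ₂ x‖ with hDdef
  have hDint : IntervalIntegrable D volume 0 1 := (hΛ₁int.sub hΛ₂int).norm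
  -- generators
  set B₁ : ℝ → 𝓗 →L[ℂ] 𝓗 := fun r => H₀ + (τ:ℂ)⁻¹ • Λ₁ (r / τ) with hB₁def
  set B₂ : ℝ → 𝓗 →L[ℂ] 𝓗 := fun r => H₀ + (τ:ℂ)⁻¹ • Λ₂ (r / τ) with hB₂def
  have hB₁int : IntervalIntegrable B₁ volume 0 t :=
    (intervalIntegrable_const.add
      (((comp_div_intervalIntegrable hΛ₁int hτ)).smul ((τ:ℂ)⁻¹))).mono_set
      (uIcc_zero_subset ht0 htτ)
  have hB₂int : IntervalIntegrable B₂ volume 0 t :=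
    (intervalIntegrable_const.add
      (((comp_div_intervalIntegrable hΛ₂int hτ)).smul ((τ:ℂ)⁻¹))).mono_set
      (uIcc_zero_subset ht0 htτ)
  -- continuity on uIcc
  have hU₁c : ContinuousOn (U₁ τ) (uIcc 0 t) := by
    rw [uIcc_of_le ht0]; exact (hU₁cont τ hτ).mono hsub
  have hU₂c : ContinuousOn (U₂ τ) (uIcc 0 t) := by
    rw [uIcc_of_le ht0]; exact (hU₂cont τ hτ).mono hsub
  have hsU₂c : ContinuousOn (fun r => star (U₂ τ r)) (uIcc 0 t) :=
    continuous_star.comp_continuousOn hU₂c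
  -- integrands
  set k : ℝ → 𝓗 →L[ℂ] 𝓗 := fun r => (-Complex.I) • (B₁ r * U₁ τ r) with hkdef
  set k₂ : ℝ → 𝓗 →L[ℂ] 𝓗 := fun r => (-Complex.I) • (B₂ r * U₂ τ r) with hk₂def
  set φ : (𝓗 →L[ℂ] 𝓗) →L[ℝ] (𝓗 →L[ℂ] 𝓗) :=
    ((starL' ℝ : (𝓗 →L[ℂ] 𝓗) ≃L[ℝ] (𝓗 →L[ℂ] 𝓗)) : (𝓗 →L[ℂ] 𝓗) →L[ℝ] (𝓗 →L[ℂ] 𝓗)) with hφdef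
  have hφ : ∀ x : 𝓗 →L[ℂ] 𝓗, φ x = star x := fun x => rfl
  set f : ℝ → 𝓗 →L[ℂ] 𝓗 := fun r => star (k₂ r) with hfdef
  have hkint : IntervalIntegrable k volume 0 t :=
    (hB₁int.mul_continuousOn hU₁c).smul (-Complex.I)
  have hk₂int : IntervalIntegrable k₂ volume 0 t :=
    (hB₂int.mul_continuousOn hU₂c).smul (-Complex.I)
  have hfint : IntervalIntegrable f volume 0 t := by
    have := clm_comp_intervalIntegrable φ hk₂int
    simpa [hφ] using this
  -- Volterra equations
  have hG : ∀ r ∈ Icc (0:ℝ) t, U₁ τ r = 1 + ∫ u in (0:ℝ)..r, k u := fun r hr =>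
    hU₁eq τ hτ r (hsub hr)
  have hF : ∀ r ∈ Icc (0:ℝ) t, star (U₂ τ r) = 1 + ∫ u in (0:ℝ)..r, f u := by
    intro r hr
    have h2 := hU₂eq τ hτ r (hsub hr)
    have hint2 : IntervalIntegrable k₂ volume 0 r :=
      hk₂int.mono_set (uIcc_zero_subset hr.1 hr.2)
    have hs2 : star (∫ u in (0:ℝ)..r, k₂ u) = ∫ u in (0:ℝ)..r, f u := by
      rw [hfdef]
      exact (clm_intervalIntegral_comm φ hint2).symm
    calc star (U₂ τ r) = star (1 + ∫ u in (0:ℝ)..r, k₂ u) := by rw [← h2]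
      _ = 1 + ∫ u in (0:ℝ)..r, f u := by rw [star_add, star_one, hs2]
  -- the product identity
  have key := volterra_mul (E := 𝓗 →L[ℂ] 𝓗) ht0 hfint hkint hF hG
  -- pointwise bound on the integrand
  have hpt : ∀ r ∈ Icc (0:ℝ) t,
      ‖f r * U₁ τ r + star (U₂ τ r) * k r‖ ≤ τ⁻¹ * D (r / τ) := by
    intro r hr
    have hrτ : r / τ ∈ Icc (0:ℝ) 1 :=
      ⟨div_nonneg hr.1 hτ.le, (div_le_one hτ).2 (hr.2.trans htτ)⟩
    have hrIcc : r ∈ Icc (0:ℝ) τ := hsub hr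
    have hB₂sa : star (B₂ r) = B₂ r := by
      rw [hB₂def]
      simp only [star_add, star_smul, hH₀.star_eq, (hΛ₂sa _ hrτ).star_eq,
        Complex.star_def, map_inv₀, Complex.conj_ofReal]
    have hfr : f r = Complex.I • (star (U₂ τ r) * B₂ r) := by
      rw [hfdef]
      simp only [hk₂def, star_smul, star_mul, hB₂sa, Complex.star_def, map_neg,
        Complex.conj_I, neg_neg]
    have hid : f r * U₁ τ r + star (U₂ τ r) * k r
        = (-Complex.I) • (star (U₂ τ r) * (((τ:ℂ)⁻¹ • (Λ₁ (r/τ) - Λ₂ (r/τ))) * U₁ τ r)) := by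
      rw [hfr, hkdef, hB₁def, hB₂def]
      simp only [smul_mul_assoc, mul_smul_comm, add_mul, mul_add, smul_sub, sub_mul, mul_sub,
        smul_add, neg_smul, smul_smul, mul_assoc, mul_neg, neg_mul, smul_neg]
      module
    rw [hid]
    have hn1 : ‖star (U₂ τ r)‖ ≤ 1 := by
      rw [norm_star]; exact hUnorm _ (hU₂un τ hτ r hrIcc).1
    have hn2 : ‖U₁ τ r‖ ≤ 1 := hUnorm _ (hU₁un τ hτ r hrIcc).1
    have hM : ‖((τ:ℂ)⁻¹ • (Λ₁ (r/τ) - Λ₂ (r/τ)) : 𝓗 →L[ℂ] 𝓗)‖ = τ⁻¹ * D (r/τ) := by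
      rw [norm_smul, hDdef]
      simp [abs_of_pos hτ]
    calc ‖(-Complex.I) • (star (U₂ τ r) * (((τ:ℂ)⁻¹ • (Λ₁ (r/τ) - Λ₂ (r/τ))) * U₁ τ r))‖
        = ‖star (U₂ τ r) * (((τ:ℂ)⁻¹ • (Λ₁ (r/τ) - Λ₂ (r/τ))) * U₁ τ r)‖ := by
          rw [norm_smul]; simp
      _ ≤ ‖star (U₂ τ r)‖ * (‖((τ:ℂ)⁻¹ • (Λ₁ (r/τ) - Λ₂ (r/τ)) : 𝓗 →L[ℂ] 𝓗)‖ * ‖U₁ τ r‖) :=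
          (norm_mul_le _ _).trans (by gcongr; exact norm_mul_le _ _)
      _ ≤ 1 * (‖((τ:ℂ)⁻¹ • (Λ₁ (r/τ) - Λ₂ (r/τ)) : 𝓗 →L[ℂ] 𝓗)‖ * 1) :=
          mul_le_mul hn1
            (mul_le_mul_of_nonneg_left hn2 (norm_nonneg _)) (by positivity) zero_le_one
      _ = τ⁻¹ * D (r/τ) := by rw [one_mul, mul_one, hM]
  -- integrability of the full integrand
  have hintint : IntervalIntegrable (fun r => f r * U₁ τ r + star (U₂ τ r) * k r) volume 0 t :=
    (hfint.mul_continuousOn hU₁c).add (hkint.continuousOn_mul hsU₂c)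
  have hDτint : IntervalIntegrable (fun r => τ⁻¹ * D (r / τ)) volume 0 t :=
    (((comp_div_intervalIntegrable hDint hτ)).const_mul τ⁻¹).mono_set
      (uIcc_zero_subset ht0 htτ)
  -- chain of estimates
  have step1 : ‖U₁ τ t - U₂ τ t‖ ≤ ‖star (U₂ τ t) * U₁ τ t - 1‖ := by
    have hrw : U₁ τ t - U₂ τ t = U₂ τ t * (star (U₂ τ t) * U₁ τ t - 1) := by
      rw [mul_sub, ← mul_assoc, (hU₂un τ hτ t htmem).2, one_mul, mul_one]
    rw [hrw]
    have := norm_mul_le (U₂ τ t) (star (U₂ τ t) * U₁ τ t - 1)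
    have hUt : ‖U₂ τ t‖ ≤ 1 := hUnorm _ (hU₂un τ hτ t htmem).1
    nlinarith [norm_nonneg (star (U₂ τ t) * U₁ τ t - 1)]
  have step2 : star (U₂ τ t) * U₁ τ t - 1
      = ∫ r in (0:ℝ)..t, (f r * U₁ τ r + star (U₂ τ r) * k r) := by
    rw [key, one_mul, add_sub_cancel_left]
  have step3 : ‖star (U₂ τ t) * U₁ τ t - 1‖ ≤ ∫ r in (0:ℝ)..t, τ⁻¹ * D (r / τ) := by
    rw [step2]
    exact (intervalIntegral.norm_integral_le_integral_norm ht0).trans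
      (intervalIntegral.integral_mono_on ht0 hintint.norm hDτint hpt)
  have step4 : (∫ r in (0:ℝ)..t, τ⁻¹ * D (r / τ)) = ∫ r in (0:ℝ)..s, D r := by
    rw [intervalIntegral.integral_const_mul, intervalIntegral.integral_comp_div D (ne_of_gt hτ),
      zero_div, htdef, mul_div_cancel_left₀ s (ne_of_gt hτ), smul_eq_mul,
      inv_mul_cancel_left₀ (ne_of_gt hτ)]
  have step5 : (∫ r in (0:ℝ)..s, D r) ≤ ∫ r in (0:ℝ)..1, D r := by
    have i01 : IntervalIntegrable D volume 0 s :=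
      hDint.mono_set (uIcc_zero_subset hs.1 hs.2)
    have is1 : IntervalIntegrable D volume s 1 := by
      apply hDint.mono_set
      rw [uIcc_of_le hs.2, uIcc_of_le (zero_le_one)]
      exact Icc_subset_Icc hs.1 le_rfl
    calc (∫ r in (0:ℝ)..s, D r) ≤ (∫ r in (0:ℝ)..s, D r) + ∫ r in s..1, D r :=
          le_add_of_nonneg_right
            (intervalIntegral.integral_nonneg hs.2 fun x _ => norm_nonneg _)
      _ = ∫ r in (0:ℝ)..1, D r := intervalIntegral.integral_add_adjacent_intervals i01 is1
  calc ‖U₁ τ t - U₂ τ t‖ ≤ ‖star (U₂ τ t) * U₁ τ t - 1‖ := step1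
    _ ≤ ∫ r in (0:ℝ)..t, τ⁻¹ * D (r / τ) := step3
    _ = ∫ r in (0:ℝ)..s, D r := step4
    _ ≤ ∫ r in (0:ℝ)..1, D r := step5
end

section
/- Fix E ∈ ℝ and let P̄_E = 1 − χ(H₀ = E). Then (i) for every ψ ∈ 𝓗, sup_{0 ≤ s ≤ r ≤ 1} ‖∫ₛʳ P̄_E e^{iτ(r'−s)(H₀−E)} dr' ψ‖ → 0 as τ → ∞; and (ii) for any family B : [0,1] → B(𝓗) of bounded operators, differentiable in norm with bounded derivative and independent of τ, and every ψ ∈ 𝓗, sup_{0 ≤ s ≤ r ≤ 1} ‖∫ₛʳ P̄_E e^{iτ(r'−s)(H₀−E)} B(r') dr' ψ‖ → 0 as τ → ∞. -/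
open MeasureTheory Filter Set
open scoped Topology

/-- An abstract Borel functional calculus for a bounded self-adjoint operator `H₀` on a
complex Hilbert space; these properties uniquely characterize the Borel functional
calculus of `H₀`. -/
structure BorelFC {𝓗 : Type*} [NormedAddCommGroup 𝓗] [InnerProductSpace ℂ 𝓗]
    [CompleteSpace 𝓗] (H₀ : 𝓗 →L[ℂ] 𝓗) where
  app : (ℝ → ℂ) → (𝓗 →L[ℂ] 𝓗)
  app_add : ∀ f g, app (fun x => f x + g x) = app f + app g
  app_mul : ∀ f g, app (fun x => f x * g x) = app f * app g
  app_star : ∀ f, app (fun x => (starRingEnd ℂ) (f x)) = star (app f)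
  app_one : app (fun _ => 1) = 1
  app_id : app (fun x => (x : ℂ)) = H₀
  app_norm : ∀ (f : ℝ → ℂ) (C : ℝ), 0 ≤ C →
      (∀ x : ℝ, (x : ℂ) ∈ spectrum ℂ H₀ → ‖f x‖ ≤ C) → ‖app f‖ ≤ C
  app_sot : ∀ (f : ℕ → ℝ → ℂ) (g : ℝ → ℂ) (C : ℝ),
      (∀ n x, ‖f n x‖ ≤ C) → (∀ x, Tendsto (fun n => f n x) atTop (𝓝 (g x))) →
      ∀ ψ : 𝓗, Tendsto (fun n => app (f n) ψ) atTop (𝓝 (app g ψ))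

/-- The spectral projection `χ(H₀ = E)` onto the eigenspace of `H₀` for eigenvalue `E`
(possibly zero). -/
noncomputable def BorelFC.projEQ {𝓗 : Type*} [NormedAddCommGroup 𝓗] [InnerProductSpace ℂ 𝓗]
    [CompleteSpace 𝓗] {H₀ : 𝓗 →L[ℂ] 𝓗} (B : BorelFC H₀) (E : ℝ) : 𝓗 →L[ℂ] 𝓗 :=
  B.app (fun x => if x = E then 1 else 0)

namespace Stmt14Aux

variable {𝓗 : Type*} [NormedAddCommGroup 𝓗] [InnerProductSpace ℂ 𝓗] [CompleteSpace 𝓗]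

section U

/-- The unitary group `e^{itA}`. -/
noncomputable def U (A : 𝓗 →L[ℂ] 𝓗) (t : ℝ) : 𝓗 →L[ℂ] 𝓗 :=
  NormedSpace.exp ((t : ℂ) • (Complex.I • A))

lemma U_def (A : 𝓗 →L[ℂ] 𝓗) (t : ℝ) :
    U A t = NormedSpace.exp ((t : ℂ) • (Complex.I • A)) := rfl

lemma U_zero (A : 𝓗 →L[ℂ] 𝓗) : U A 0 = 1 := by
  simp [U_def, NormedSpace.exp_zero]

lemma U_add (A : 𝓗 →L[ℂ] 𝓗) (a b : ℝ) : U A (a + b) = U A a * U A b := by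
  rw [U_def, U_def, U_def,
    ← NormedSpace.exp_add_of_commute_of_mem_ball (𝕂 := ℂ) (((Commute.refl (Complex.I • A)).smul_left
      ((a : ℂ))).smul_right ((b : ℂ)))
      (by rw [NormedSpace.expSeries_radius_eq_top]; exact Metric.mem_eball.mpr (edist_lt_top _ _))
      (by rw [NormedSpace.expSeries_radius_eq_top]; exact Metric.mem_eball.mpr (edist_lt_top _ _))]
  congr 1
  push_cast
  rw [add_smul]

lemma U_star (A : 𝓗 →L[ℂ] 𝓗) (hA : star A = A) (t : ℝ) : star (U A t) = U A (-t) := by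
  have hst : star ((t : ℂ) • (Complex.I • A)) = ((-t : ℝ) : ℂ) • (Complex.I • A) := by
    rw [star_smul, star_smul, hA, smul_smul, smul_smul]
    congr 1
    simp only [Complex.star_def, Complex.conj_ofReal, Complex.conj_I]
    push_cast
    ring
  calc star (U A t) = NormedSpace.exp (star ((t : ℂ) • (Complex.I • A))) :=
        NormedSpace.star_exp _
    _ = U A (-t) := by rw [hst]; rfl

lemma U_neg_mul (A : 𝓗 →L[ℂ] 𝓗) (t : ℝ) : U A (-t) * U A t = 1 := by
  have h := U_add A (-t) t
  rw [neg_add_cancel, U_zero] at h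
  exact h.symm

lemma U_norm_apply (A : 𝓗 →L[ℂ] 𝓗) (hA : star A = A) (t : ℝ) (ψ : 𝓗) :
    ‖U A t ψ‖ = ‖ψ‖ := by
  have h1 : inner (𝕜 := ℂ) (U A t ψ) (U A t ψ) = inner (𝕜 := ℂ) ψ ψ := by
    have h2 := ContinuousLinearMap.adjoint_inner_left (U A t) ψ (U A t ψ)
    rw [← h2, ← ContinuousLinearMap.star_eq_adjoint, U_star A hA]
    have h3 : (U A (-t)) (U A t ψ) = ψ := by
      have h4 := congrArg (fun (X : 𝓗 →L[ℂ] 𝓗) => X ψ) (U_neg_mul A t)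
      simpa using h4
    rw [h3]
  rw [norm_eq_sqrt_re_inner (𝕜 := ℂ), norm_eq_sqrt_re_inner (𝕜 := ℂ) ψ, h1]

lemma U_norm_le (A : 𝓗 →L[ℂ] 𝓗) (hA : star A = A) (t : ℝ) : ‖U A t‖ ≤ 1 :=
  ContinuousLinearMap.opNorm_le_bound _ zero_le_one fun ψ => by
    rw [U_norm_apply A hA, one_mul]

lemma U_hasDerivAt (A : 𝓗 →L[ℂ] 𝓗) (t : ℝ) :
    HasDerivAt (fun x : ℝ => U A x) ((Complex.I • A) * U A t) t := by
  have hfun : (fun x : ℝ => U A x) = fun x : ℝ => NormedSpace.exp (x • (Complex.I • A)) := by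
    funext x
    rw [U_def]
    exact congrArg _ (algebraMap_smul ℂ x (Complex.I • A))
  have ht : U A t = NormedSpace.exp (t • (Complex.I • A)) := congrFun hfun t
  rw [hfun, ht]
  exact hasDerivAt_exp_smul_const' (𝕂 := ℝ) _ t

lemma U_comp_hasDerivAt (A : 𝓗 →L[ℂ] 𝓗) (τ s r' : ℝ) :
    HasDerivAt (fun x => U A (τ * (x - s))) (τ • ((Complex.I • A) * U A (τ * (r' - s)))) r' := by
  have h1 : HasDerivAt (fun x : ℝ => τ * (x - s)) τ r' := by
    simpa using ((hasDerivAt_id r').sub_const s).const_mul τ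
  exact HasDerivAt.scomp r' (U_hasDerivAt A (τ * (r' - s))) h1

lemma U_cont (A : 𝓗 →L[ℂ] 𝓗) (τ s : ℝ) : Continuous (fun x : ℝ => U A (τ * (x - s))) :=
  continuous_iff_continuousAt.mpr fun x => (U_comp_hasDerivAt A τ s x).continuousAt

end U

section App

variable {H₀ : 𝓗 →L[ℂ] 𝓗} (B : BorelFC H₀)

lemma app_congr {f g : ℝ → ℂ} (h : ∀ x, f x = g x) : B.app f = B.app g :=
  congrArg B.app (funext h)

lemma app_zero : B.app (fun _ => 0) = 0 := by
  have h : B.app (fun _ => (0 : ℂ)) = B.app (fun _ => (0 : ℂ)) + B.app (fun _ => (0 : ℂ)) := by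
    calc B.app (fun _ => (0 : ℂ)) = B.app (fun _ => (0 : ℂ) + (0 : ℂ)) :=
          app_congr B fun x => by ring
      _ = _ := B.app_add _ _
  exact left_eq_add.mp h

lemma app_neg (f : ℝ → ℂ) : B.app (fun x => -(f x)) = -(B.app f) := by
  have h2 : B.app (fun x => f x + -(f x)) = 0 := by
    calc B.app (fun x => f x + -(f x)) = B.app (fun _ => (0 : ℂ)) :=
          app_congr B fun x => by ring
      _ = 0 := app_zero B
  have h3 : B.app f + B.app (fun x => -(f x)) = 0 := (B.app_add _ _).symm.trans h2
  exact eq_neg_of_add_eq_zero_right h3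

lemma app_sub (f g : ℝ → ℂ) : B.app (fun x => f x - g x) = B.app f - B.app g := by
  calc B.app (fun x => f x - g x) = B.app (fun x => f x + -(g x)) :=
        app_congr B fun x => by ring
    _ = B.app f + B.app (fun x => -(g x)) := B.app_add _ _
    _ = B.app f - B.app g := by rw [app_neg B g, ← sub_eq_add_neg]

lemma app_natCast_mul (f : ℝ → ℂ) : ∀ n : ℕ, B.app (fun x => (n : ℂ) * f x) = (n : ℂ) • B.app f := by
  intro n
  induction n with
  | zero =>
    calc B.app (fun x => ((0 : ℕ) : ℂ) * f x) = B.app (fun _ => (0 : ℂ)) :=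
          app_congr B fun x => by push_cast; ring
      _ = 0 := app_zero B
      _ = ((0 : ℕ) : ℂ) • B.app f := by simp
  | succ n ih =>
    calc B.app (fun x => ((n + 1 : ℕ) : ℂ) * f x)
        = B.app (fun x => (n : ℂ) * f x + f x) := app_congr B fun x => by push_cast; ring
      _ = B.app (fun x => (n : ℂ) * f x) + B.app f := B.app_add _ _
      _ = (n : ℂ) • B.app f + B.app f := by rw [ih]
      _ = ((n + 1 : ℕ) : ℂ) • B.app f := by push_cast; rw [add_smul, one_smul]

lemma app_div_nat (f : ℝ → ℂ) (m n : ℕ) (hn : n ≠ 0) :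
    B.app (fun x => ((m : ℂ) / (n : ℂ)) * f x) = ((m : ℂ) / (n : ℂ)) • B.app f := by
  have hnC : (n : ℂ) ≠ 0 := Nat.cast_ne_zero.mpr hn
  have h : (n : ℂ) • B.app (fun x => ((m : ℂ) / (n : ℂ)) * f x)
      = (n : ℂ) • (((m : ℂ) / (n : ℂ)) • B.app f) := by
    calc (n : ℂ) • B.app (fun x => ((m : ℂ) / (n : ℂ)) * f x)
        = B.app (fun x => (n : ℂ) * (((m : ℂ) / (n : ℂ)) * f x)) :=
          (app_natCast_mul B _ n).symm
      _ = B.app (fun x => (m : ℂ) * f x) := app_congr B fun x => by field_simp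
      _ = (m : ℂ) • B.app f := app_natCast_mul B f m
      _ = (n : ℂ) • (((m : ℂ) / (n : ℂ)) • B.app f) := by
          rw [smul_smul]; congr 1; field_simp
  have h2 := congrArg (fun X => (n : ℂ)⁻¹ • X) h
  simpa [smul_smul, ← mul_assoc, inv_mul_cancel₀ hnC] using h2

lemma app_real_smul_nonneg (c : ℝ) (hc : 0 ≤ c) (f : ℝ → ℂ) (Cf : ℝ)
    (hf : ∀ x, ‖f x‖ ≤ Cf) :
    B.app (fun x => (c : ℂ) * f x) = (c : ℂ) • B.app f := by
  have hCf0 : 0 ≤ Cf := le_trans (norm_nonneg _) (hf 0)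
  set D := B.app (fun x => (c : ℂ) * f x) - (c : ℂ) • B.app f with hD
  have key : ∀ θ : ℝ, 0 < θ → ‖D‖ ≤ θ * (Cf + ‖B.app f‖) := by
    intro θ hθ
    obtain ⟨n, hn⟩ := exists_nat_gt (1 / θ)
    have hn0 : 0 < (n : ℝ) := lt_trans (by positivity) hn
    have hnne : n ≠ 0 := by exact_mod_cast hn0.ne'
    set m := ⌊c * n⌋₊ with hm
    have hm1 : (m : ℝ) ≤ c * n := Nat.floor_le (by positivity)
    have hm2 : c * n < m + 1 := Nat.lt_floor_add_one _
    have hq1 : 0 ≤ c - (m : ℝ) / n := by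
      rw [sub_nonneg, div_le_iff₀ hn0]; exact hm1
    have hq2 : c - (m : ℝ) / n ≤ θ := by
      have hcm : c - (m : ℝ) / n ≤ 1 / n := by
        have h5 : c ≤ ((m : ℝ) + 1) / n := (le_div_iff₀ hn0).mpr (by linarith)
        have h6 : ((m : ℝ) + 1) / n = (m : ℝ) / n + 1 / n := by ring
        linarith
      have h1n : 1 / (n : ℝ) ≤ θ := by
        rw [div_le_iff₀ hn0]
        nlinarith [(div_lt_iff₀ hθ).mp hn]
      linarith
    have e2 : B.app (fun x => ((c : ℂ) - (m : ℂ) / (n : ℂ)) * f x + ((m : ℂ) / (n : ℂ)) * f x)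
        = B.app (fun x => ((c : ℂ) - (m : ℂ) / (n : ℂ)) * f x) + ((m : ℂ) / (n : ℂ)) • B.app f :=
      (B.app_add _ _).trans (by rw [app_div_nat B f m n hnne])
    have hsplit : D = B.app (fun x => ((c : ℂ) - (m : ℂ) / (n : ℂ)) * f x)
        + (((m : ℂ) / (n : ℂ)) - (c : ℂ)) • B.app f := by
      rw [hD]
      have e1 : B.app (fun x => (c : ℂ) * f x)
          = B.app (fun x => ((c : ℂ) - (m : ℂ) / (n : ℂ)) * f x + ((m : ℂ) / (n : ℂ)) * f x) :=
        app_congr B fun x => by ring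
      rw [e1, e2, sub_smul]
      abel
    have b1 : ‖B.app (fun x => ((c : ℂ) - (m : ℂ) / (n : ℂ)) * f x)‖ ≤ (c - (m : ℝ) / n) * Cf := by
      apply B.app_norm _ _ (mul_nonneg hq1 hCf0)
      intro x _
      have hcast : ((c : ℂ) - (m : ℂ) / (n : ℂ)) = ((c - (m : ℝ) / (n : ℝ) : ℝ) : ℂ) := by
        push_cast; ring
      rw [hcast, norm_mul, Complex.norm_real, Real.norm_eq_abs, abs_of_nonneg hq1]
      exact mul_le_mul_of_nonneg_left (hf x) hq1
    have b2 : ‖(((m : ℂ) / (n : ℂ)) - (c : ℂ)) • B.app f‖ ≤ (c - (m : ℝ) / n) * ‖B.app f‖ := by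
      rw [norm_smul]
      apply mul_le_mul_of_nonneg_right _ (norm_nonneg _)
      have hcast : ((m : ℂ) / (n : ℂ)) - (c : ℂ) = (((m : ℝ) / n - c : ℝ) : ℂ) := by
        push_cast; ring
      rw [hcast, Complex.norm_real, Real.norm_eq_abs, abs_sub_comm, abs_of_nonneg hq1]
    rw [hsplit]
    refine le_trans (norm_add_le _ _) ?_
    have b3 : (c - (m : ℝ) / n) * (Cf + ‖B.app f‖) ≤ θ * (Cf + ‖B.app f‖) :=
      mul_le_mul_of_nonneg_right hq2 (add_nonneg hCf0 (norm_nonneg _))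
    nlinarith [b1, b2]
  have hD0 : ‖D‖ ≤ 0 := by
    by_contra hcon
    push_neg at hcon
    have hK : (0 : ℝ) < Cf + ‖B.app f‖ + 1 := by positivity
    have hkey := key (‖D‖ / (2 * (Cf + ‖B.app f‖ + 1))) (by positivity)
    have hlt : (‖D‖ / (2 * (Cf + ‖B.app f‖ + 1))) * (Cf + ‖B.app f‖) ≤ ‖D‖ / 2 := by
      rw [div_mul_eq_mul_div, div_le_div_iff₀ (by positivity) (by norm_num)]
      nlinarith [norm_nonneg (B.app f), hCf0, hcon]
    linarith
  have hzero : D = 0 := norm_le_zero_iff.mp hD0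
  rw [hD] at hzero
  exact sub_eq_zero.mp hzero

lemma app_real_smul (c : ℝ) (f : ℝ → ℂ) (Cf : ℝ) (hf : ∀ x, ‖f x‖ ≤ Cf) :
    B.app (fun x => (c : ℂ) * f x) = (c : ℂ) • B.app f := by
  rcases le_or_gt 0 c with hc | hc
  · exact app_real_smul_nonneg B c hc f Cf hf
  · have h1 : B.app (fun x => (c : ℂ) * f x) = B.app (fun x => -(((-c : ℝ) : ℂ) * f x)) :=
      app_congr B fun x => by push_cast; ring
    rw [h1, app_neg B _, app_real_smul_nonneg B (-c) (by linarith) f Cf hf, ← neg_smul]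
    congr 1
    push_cast
    ring

lemma app_commute_H (f : ℝ → ℂ) : Commute (B.app f) H₀ := by
  show B.app f * H₀ = H₀ * B.app f
  calc B.app f * H₀ = B.app f * B.app (fun x => (x : ℂ)) := by rw [B.app_id]
    _ = B.app (fun x => f x * (x : ℂ)) := (B.app_mul _ _).symm
    _ = B.app (fun x => (x : ℂ) * f x) := app_congr B fun x => mul_comm _ _
    _ = B.app (fun x => (x : ℂ)) * B.app f := B.app_mul _ _
    _ = H₀ * B.app f := by rw [B.app_id]

lemma commute_app_U (f : ℝ → ℂ) (c : ℂ) (t : ℝ) :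
    Commute (B.app f) (U (H₀ - c • 1) t) := by
  have h1 : Commute (B.app f) (H₀ - c • 1) :=
    (app_commute_H B f).sub_right ((Commute.one_right _).smul_right c)
  exact ((h1.smul_right Complex.I).smul_right ((t : ℂ))).exp_right

lemma commute_one_sub_proj_U (E : ℝ) (t : ℝ) :
    Commute ((1 : 𝓗 →L[ℂ] 𝓗) - B.projEQ E) (U (H₀ - (E : ℂ) • 1) t) :=
  (Commute.one_left _).sub_left
    (commute_app_U B (fun x => if x = E then 1 else 0) ((E : ℂ)) t)

lemma proj_norm_le (E : ℝ) : ‖B.projEQ E‖ ≤ 1 :=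
  B.app_norm (fun x => if x = E then 1 else 0) 1 zero_le_one fun x _ => by
    by_cases h : x = E <;> simp [h]

lemma one_sub_proj_norm_le (E : ℝ) : ‖(1 : 𝓗 →L[ℂ] 𝓗) - B.projEQ E‖ ≤ 2 := by
  refine le_trans (norm_sub_le _ _) ?_
  have h1 : ‖(1 : 𝓗 →L[ℂ] 𝓗)‖ ≤ 1 := ContinuousLinearMap.norm_id_le
  have h2 := proj_norm_le B E
  linarith

end App

section Spectral

variable {H₀ : 𝓗 →L[ℂ] 𝓗} (B : BorelFC H₀)

/-- indicator of `0 < |x-E| ≤ δ`. -/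
noncomputable def Qfun (E δ : ℝ) : ℝ → ℂ := fun x => if x ≠ E ∧ |x - E| ≤ δ then 1 else 0

/-- indicator of `|x-E| > δ`. -/
noncomputable def Rfun (E δ : ℝ) : ℝ → ℂ := fun x => if δ < |x - E| then 1 else 0

/-- `(x-E)⁻¹` cut off to `|x-E| > δ`. -/
noncomputable def gfun (E δ : ℝ) : ℝ → ℂ :=
  fun x => if δ < |x - E| then ((x : ℂ) - (E : ℂ))⁻¹ else 0

lemma gfun_norm_le {E δ : ℝ} (hδ : 0 < δ) (x : ℝ) : ‖gfun E δ x‖ ≤ δ⁻¹ := by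
  simp only [gfun]
  split_ifs with h
  · rw [norm_inv]
    have h1 : ‖(x : ℂ) - (E : ℂ)‖ = |x - E| := by
      rw [← Complex.ofReal_sub, Complex.norm_real, Real.norm_eq_abs]
    rw [h1]
    exact inv_anti₀ hδ h.le
  · simp
    positivity

lemma one_sub_proj (E δ : ℝ) (hδ : 0 < δ) :
    (1 : 𝓗 →L[ℂ] 𝓗) - B.projEQ E = B.app (Qfun E δ) + B.app (Rfun E δ) := by
  have h1 : (1 : 𝓗 →L[ℂ] 𝓗) - B.projEQ E
      = B.app (fun x => 1 - (if x = E then 1 else 0)) := by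
    rw [BorelFC.projEQ, ← B.app_one]
    exact (app_sub B _ _).symm
  rw [h1, ← B.app_add (Qfun E δ) (Rfun E δ)]
  apply app_congr
  intro x
  simp only [Qfun, Rfun]
  by_cases hx : x = E
  · subst hx
    rw [if_pos rfl, if_neg (by simp), if_neg (by simp [not_lt.mpr hδ.le])]
    norm_num
  · rw [if_neg hx]
    rcases le_or_gt |x - E| δ with h | h
    · rw [if_pos ⟨hx, h⟩, if_neg (not_lt.mpr h)]
      norm_num
    · rw [if_neg (fun hc => absurd hc.2 (not_le.mpr h)), if_pos h]
      norm_num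

lemma SA (E δ : ℝ) (hδ : 0 < δ) :
    B.app (gfun E δ) * (H₀ - (E : ℂ) • 1) = B.app (Rfun E δ) := by
  have hgb : ∀ x, ‖gfun E δ x‖ ≤ δ⁻¹ := gfun_norm_le hδ
  have h1 : B.app (gfun E δ) * H₀ = B.app (fun x => gfun E δ x * (x : ℂ)) := by
    have h := B.app_mul (gfun E δ) (fun x => (x : ℂ))
    rw [B.app_id] at h
    exact h.symm
  have h2 : B.app (gfun E δ) * ((E : ℂ) • 1) = B.app (fun x => (E : ℂ) * gfun E δ x) := by
    calc B.app (gfun E δ) * ((E : ℂ) • 1) = (E : ℂ) • B.app (gfun E δ) := by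
          rw [mul_smul_comm, mul_one]
      _ = B.app (fun x => (E : ℂ) * gfun E δ x) :=
          (app_real_smul B E (gfun E δ) δ⁻¹ hgb).symm
  calc B.app (gfun E δ) * (H₀ - (E : ℂ) • 1)
      = B.app (gfun E δ) * H₀ - B.app (gfun E δ) * ((E : ℂ) • 1) := mul_sub _ _ _
    _ = B.app (fun x => gfun E δ x * (x : ℂ)) - B.app (fun x => (E : ℂ) * gfun E δ x) := by
        rw [h1, h2]
    _ = B.app (fun x => gfun E δ x * (x : ℂ) - (E : ℂ) * gfun E δ x) := (app_sub B _ _).symm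
    _ = B.app (Rfun E δ) := by
        apply app_congr
        intro x
        simp only [gfun, Rfun]
        split_ifs with h
        · have hne0 : x - E ≠ 0 := by
            have := hδ.trans h
            exact abs_pos.mp this
          have hne : (x : ℂ) - (E : ℂ) ≠ 0 := by
            rw [← Complex.ofReal_sub]
            exact_mod_cast Complex.ofReal_ne_zero.mpr hne0
          field_simp
        · ring

lemma Qtend (E : ℝ) (ψ : 𝓗) :
    Tendsto (fun n : ℕ => B.app (Qfun E (1 / ((n : ℝ) + 1))) ψ) atTop (𝓝 0) := by
  have h0 : B.app (fun _ => (0 : ℂ)) ψ = 0 := by rw [app_zero B]; rfl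
  have hsot := B.app_sot (fun n => Qfun E (1 / ((n : ℝ) + 1))) (fun _ => 0) 1 ?_ ?_ ψ
  · rwa [h0] at hsot
  · intro n x
    simp only [Qfun]
    split_ifs <;> norm_num
  · intro x
    by_cases hx : x = E
    · have hz : ∀ n : ℕ, Qfun E (1 / ((n : ℝ) + 1)) x = 0 := fun n => by simp [Qfun, hx]
      rw [show (fun n : ℕ => Qfun E (1 / ((n : ℝ) + 1)) x) = fun _ => (0 : ℂ) from funext hz]
      exact tendsto_const_nhds
    · have hpos : 0 < |x - E| := abs_pos.mpr (sub_ne_zero.mpr hx)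
      obtain ⟨N, hN⟩ := exists_nat_gt (1 / |x - E|)
      apply tendsto_atTop_of_eventually_const (i₀ := N)
      intro n hn
      have hcast : (N : ℝ) ≤ (n : ℝ) := Nat.cast_le.mpr hn
      have h2 : 1 / |x - E| < (n : ℝ) + 1 := by linarith
      have h3 : (1 : ℝ) < ((n : ℝ) + 1) * |x - E| := (div_lt_iff₀ hpos).mp h2
      have h1 : 1 / ((n : ℝ) + 1) < |x - E| := by
        rw [div_lt_iff₀ (by positivity)]
        nlinarith
      have hno : ¬(x ≠ E ∧ |x - E| ≤ 1 / ((n : ℝ) + 1)) := fun hc =>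
        absurd hc.2 (not_le.mpr h1)
      exact if_neg hno

end Spectral

section Core

variable {H₀ : 𝓗 →L[ℂ] 𝓗} (B : BorelFC H₀)

set_option maxHeartbeats 2000000 in
theorem core (hH₀ : IsSelfAdjoint H₀) (E : ℝ) (ψ : 𝓗) {ε : ℝ} (hε : 0 < ε) :
    ∃ T : ℝ, 1 ≤ T ∧ ∀ τ, T ≤ τ → ∀ s r : ℝ, 0 ≤ s → s ≤ r → r ≤ 1 →
      ‖((∫ r' in s..r,
          ((1 : 𝓗 →L[ℂ] 𝓗) - B.projEQ E) * U (H₀ - (E : ℂ) • 1) (τ * (r' - s)) :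
            𝓗 →L[ℂ] 𝓗)) ψ‖ < ε := by
  have hA'star : star (H₀ - (E : ℂ) • (1 : 𝓗 →L[ℂ] 𝓗)) = H₀ - (E : ℂ) • 1 := by
    rw [star_sub, hH₀.star_eq, star_smul, star_one]
    congr 1
    simp [Complex.star_def, Complex.conj_ofReal]
  obtain ⟨n₀, hn₀⟩ := Metric.tendsto_atTop.mp (Qtend B E ψ) (ε / 2) (by positivity)
  have hn₀' := hn₀ n₀ le_rfl
  rw [dist_eq_norm, sub_zero] at hn₀'
  set δ : ℝ := 1 / ((n₀ : ℝ) + 1) with hδdef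
  have hδ : 0 < δ := by positivity
  refine ⟨1 + 4 * ‖ψ‖ / (δ * ε), le_add_of_nonneg_right (by positivity), ?_⟩
  intro τ hτ s r hs hsr hr1
  have hτ1 : (1 : ℝ) ≤ τ := le_trans (le_add_of_nonneg_right (by positivity)) hτ
  have hτ0 : (0 : ℝ) < τ := lt_of_lt_of_le one_pos hτ1
  set Ae := H₀ - (E : ℂ) • (1 : 𝓗 →L[ℂ] 𝓗) with hAe
  set J := ∫ r' in s..r, U Ae (τ * (r' - s)) with hJ
  have hJint : IntervalIntegrable (fun r' => U Ae (τ * (r' - s))) volume s r :=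
    (U_cont Ae τ s).intervalIntegrable s r
  have hpull : (∫ r' in s..r, ((1 : 𝓗 →L[ℂ] 𝓗) - B.projEQ E) * U Ae (τ * (r' - s)))
      = ((1 : 𝓗 →L[ℂ] 𝓗) - B.projEQ E) * J := by
    have h := (ContinuousLinearMap.mul ℂ (𝓗 →L[ℂ] 𝓗)
      ((1 : 𝓗 →L[ℂ] 𝓗) - B.projEQ E)).intervalIntegral_comp_comm hJint
    simpa only [ContinuousLinearMap.mul_apply'] using h
  rw [hpull, one_sub_proj B E δ hδ, add_mul, ContinuousLinearMap.add_apply]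
  have hQJ : B.app (Qfun E δ) * J = J * B.app (Qfun E δ) := by
    have h1 : B.app (Qfun E δ) * J
        = ∫ r' in s..r, B.app (Qfun E δ) * U Ae (τ * (r' - s)) := by
      have h := (ContinuousLinearMap.mul ℂ (𝓗 →L[ℂ] 𝓗)
        (B.app (Qfun E δ))).intervalIntegral_comp_comm hJint
      simpa [ContinuousLinearMap.mul_apply'] using h.symm
    have h2 : J * B.app (Qfun E δ)
        = ∫ r' in s..r, U Ae (τ * (r' - s)) * B.app (Qfun E δ) := by
      have h := ((ContinuousLinearMap.mul ℂ (𝓗 →L[ℂ] 𝓗)).flip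
        (B.app (Qfun E δ))).intervalIntegral_comp_comm hJint
      simpa using h.symm
    rw [h1, h2]
    apply intervalIntegral.integral_congr
    intro x _
    exact (commute_app_U B (Qfun E δ) ((E : ℂ)) (τ * (x - s))).eq
  have hJnorm : ‖J‖ ≤ 1 := by
    have h := intervalIntegral.norm_integral_le_of_norm_le_const (C := 1)
      (f := fun r' => U Ae (τ * (r' - s))) (a := s) (b := r)
      (fun x _ => U_norm_le Ae hA'star (τ * (x - s)))
    calc ‖J‖ ≤ 1 * |r - s| := h
      _ ≤ 1 := by rw [one_mul, abs_of_nonneg (by linarith)]; linarith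
  have bound1 : ‖(B.app (Qfun E δ) * J) ψ‖ < ε / 2 := by
    rw [hQJ, ContinuousLinearMap.mul_apply]
    calc ‖J (B.app (Qfun E δ) ψ)‖ ≤ ‖J‖ * ‖B.app (Qfun E δ) ψ‖ :=
          ContinuousLinearMap.le_opNorm _ _
      _ ≤ 1 * ‖B.app (Qfun E δ) ψ‖ := mul_le_mul_of_nonneg_right hJnorm (norm_nonneg _)
      _ = ‖B.app (Qfun E δ) ψ‖ := one_mul _
      _ < ε / 2 := hn₀'
  have hMder : ∀ r' ∈ uIcc s r,
      HasDerivAt (fun x => τ⁻¹ • U Ae (τ * (x - s)))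
        ((Complex.I • Ae) * U Ae (τ * (r' - s))) r' := by
    intro r' _
    have h := (U_comp_hasDerivAt Ae τ s r').const_smul τ⁻¹
    rwa [smul_smul, inv_mul_cancel₀ hτ0.ne', one_smul] at h
  have hMcont : IntervalIntegrable (fun r' => (Complex.I • Ae) * U Ae (τ * (r' - s)))
      volume s r := (continuous_const.mul (U_cont Ae τ s)).intervalIntegrable s r
  have hFTC := intervalIntegral.integral_eq_sub_of_hasDerivAt hMder hMcont
  beta_reduce at hFTC
  have hss : τ * (s - s) = 0 := by ring
  rw [hss, U_zero] at hFTC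
  have hMJ : (Complex.I • Ae) * J = τ⁻¹ • (U Ae (τ * (r - s)) - 1) := by
    have h := (ContinuousLinearMap.mul ℂ (𝓗 →L[ℂ] 𝓗)
      (Complex.I • Ae)).intervalIntegral_comp_comm hJint
    calc (Complex.I • Ae) * J = ∫ r' in s..r, (Complex.I • Ae) * U Ae (τ * (r' - s)) := by
          simpa [ContinuousLinearMap.mul_apply'] using h.symm
      _ = τ⁻¹ • U Ae (τ * (r - s)) - τ⁻¹ • 1 := hFTC
      _ = τ⁻¹ • (U Ae (τ * (r - s)) - 1) := (smul_sub τ⁻¹ (U Ae (τ * (r - s))) 1).symm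
  have hnegII : (-Complex.I) * Complex.I = 1 := by
    rw [neg_mul, Complex.I_mul_I, neg_neg]
  have hA'J : Ae * J = (-Complex.I) • ((Complex.I • Ae) * J) := by
    calc Ae * J = ((-Complex.I) * Complex.I) • (Ae * J) := by rw [hnegII, one_smul]
      _ = (-Complex.I) • (Complex.I • (Ae * J)) := (smul_smul _ _ _).symm
      _ = (-Complex.I) • ((Complex.I • Ae) * J) := by rw [smul_mul_assoc]
  have hA'Jnorm : ‖Ae * J‖ ≤ 2 / τ := by
    rw [hA'J, hMJ, norm_smul, norm_smul]
    have h1 : ‖U Ae (τ * (r - s)) - 1‖ ≤ 2 := by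
      refine le_trans (norm_sub_le _ _) ?_
      have hu := U_norm_le Ae hA'star (τ * (r - s))
      have h2 : ‖(1 : 𝓗 →L[ℂ] 𝓗)‖ ≤ 1 := ContinuousLinearMap.norm_id_le
      linarith
    have h3 : ‖-Complex.I‖ = 1 := by simp
    have h4 : ‖τ⁻¹‖ = τ⁻¹ := by rw [Real.norm_eq_abs, abs_of_pos (by positivity)]
    rw [h3, h4, one_mul]
    calc τ⁻¹ * ‖U Ae (τ * (r - s)) - 1‖ ≤ τ⁻¹ * 2 :=
          mul_le_mul_of_nonneg_left h1 (by positivity)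
      _ = 2 / τ := by ring
  have bound2 : ‖(B.app (Rfun E δ) * J) ψ‖ < ε / 2 := by
    have hSAe : B.app (gfun E δ) * Ae = B.app (Rfun E δ) := by
      rw [hAe]; exact SA B E δ hδ
    have hRJ : B.app (Rfun E δ) * J = B.app (gfun E δ) * (Ae * J) := by
      rw [← hSAe, mul_assoc]
    rw [hRJ]
    have hSn : ‖B.app (gfun E δ)‖ ≤ δ⁻¹ :=
      B.app_norm _ _ (by positivity) (fun x _ => gfun_norm_le hδ x)
    calc ‖(B.app (gfun E δ) * (Ae * J)) ψ‖
        ≤ ‖B.app (gfun E δ) * (Ae * J)‖ * ‖ψ‖ := ContinuousLinearMap.le_opNorm _ _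
      _ ≤ (‖B.app (gfun E δ)‖ * ‖Ae * J‖) * ‖ψ‖ :=
          mul_le_mul_of_nonneg_right (norm_mul_le _ _) (norm_nonneg _)
      _ ≤ (δ⁻¹ * (2 / τ)) * ‖ψ‖ := by
          apply mul_le_mul_of_nonneg_right _ (norm_nonneg ψ)
          exact mul_le_mul hSn hA'Jnorm (norm_nonneg _) (by positivity)
      _ < ε / 2 := by
          have hd4 : 4 * ‖ψ‖ / (δ * ε) < τ := lt_of_lt_of_le (lt_one_add _) hτ
          have h5 : 4 * ‖ψ‖ < τ * (δ * ε) := (div_lt_iff₀ (by positivity)).mp hd4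
          have e : δ⁻¹ * (2 / τ) * ‖ψ‖ = 2 * ‖ψ‖ / (δ * τ) := by field_simp
          rw [e, div_lt_iff₀ (by positivity)]
          nlinarith [norm_nonneg ψ]
  calc ‖(B.app (Qfun E δ) * J) ψ + (B.app (Rfun E δ) * J) ψ‖
      ≤ ‖(B.app (Qfun E δ) * J) ψ‖ + ‖(B.app (Rfun E δ) * J) ψ‖ := norm_add_le _ _
    _ < ε / 2 + ε / 2 := add_lt_add bound1 bound2
    _ = ε := by ring

set_option maxHeartbeats 4000000 in
theorem core2 (hH₀ : IsSelfAdjoint H₀) (E : ℝ) (B'' B''d : ℝ → 𝓗 →L[ℂ] 𝓗)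
    (hd : ∀ x ∈ Icc (0:ℝ) 1, HasDerivWithinAt B'' (B''d x) (Icc (0:ℝ) 1) x)
    {C : ℝ} (hC : ∀ x ∈ Icc (0:ℝ) 1, ‖B'' x‖ ≤ C ∧ ‖B''d x‖ ≤ C)
    (ψ : 𝓗) {ε : ℝ} (hε : 0 < ε) :
    ∃ T : ℝ, ∀ τ, T ≤ τ → ∀ s r : ℝ, 0 ≤ s → s ≤ r → r ≤ 1 →
      ‖((∫ r' in s..r,
          ((1 : 𝓗 →L[ℂ] 𝓗) - B.projEQ E) * U (H₀ - (E : ℂ) • 1) (τ * (r' - s)) * B'' r' :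
            𝓗 →L[ℂ] 𝓗)) ψ‖ < ε := by
  have hA'star : star (H₀ - (E : ℂ) • (1 : 𝓗 →L[ℂ] 𝓗)) = H₀ - (E : ℂ) • 1 := by
    rw [star_sub, hH₀.star_eq, star_smul, star_one]
    congr 1
    simp [Complex.star_def, Complex.conj_ofReal]
  have hC0 : 0 ≤ C := le_trans (norm_nonneg _) (hC 0 (by constructor <;> norm_num)).1
  have hBcont : ContinuousOn B'' (Icc (0:ℝ) 1) := fun x hx => (hd x hx).continuousWithinAt
  obtain ⟨N₀, hN₀⟩ := exists_nat_gt (4 * C * ‖ψ‖ / ε)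
  set N : ℕ := N₀ + 1 with hNdef
  have hN : (0:ℝ) < (N:ℝ) := by
    have : 0 < N := Nat.succ_pos N₀
    exact_mod_cast this
  have hNbig : 4 * C * ‖ψ‖ / ε < (N:ℝ) := by
    refine lt_of_lt_of_le hN₀ ?_
    have : N₀ ≤ N := Nat.le_succ N₀
    exact_mod_cast this
  set ε' : ℝ := ε / (2 * (N:ℝ)) with hε'def
  have hε' : 0 < ε' := by positivity
  have hTj : ∀ j : ℕ, ∃ T : ℝ, 1 ≤ T ∧ ∀ τ, T ≤ τ → ∀ s r : ℝ, 0 ≤ s → s ≤ r → r ≤ 1 →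
      ‖((∫ r' in s..r,
          ((1 : 𝓗 →L[ℂ] 𝓗) - B.projEQ E) * U (H₀ - (E : ℂ) • 1) (τ * (r' - s)) :
            𝓗 →L[ℂ] 𝓗)) (B'' ((j:ℝ)/(N:ℝ)) ψ)‖ < ε' :=
    fun j => core B hH₀ E (B'' ((j:ℝ)/(N:ℝ)) ψ) hε'
  choose Tf hTf1 hTf2 using hTj
  obtain ⟨T0, hT0⟩ := Finset.exists_le ((Finset.range N).image Tf)
  refine ⟨max T0 1, ?_⟩
  intro τ hτ s r hs hsr hr1
  have hr0 : 0 ≤ r := le_trans hs hsr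
  have hs1 : s ≤ 1 := le_trans hsr hr1
  have hcmono : ∀ j : ℕ, min r (max s ((j:ℝ)/(N:ℝ))) ≤ min r (max s (((j+1:ℕ):ℝ)/(N:ℝ))) := by
    intro j
    apply min_le_min le_rfl
    apply max_le_max le_rfl
    have hj1 : ((j:ℕ):ℝ) ≤ ((j+1:ℕ):ℝ) := by exact_mod_cast Nat.le_succ j
    exact div_le_div_of_nonneg_right hj1 hN.le
  have hc0 : min r (max s (((0:ℕ):ℝ)/(N:ℝ))) = s := by
    rw [Nat.cast_zero, zero_div, max_eq_left hs, min_eq_right hsr]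
  have hcN : min r (max s (((N:ℕ):ℝ)/(N:ℝ))) = r := by
    rw [div_self hN.ne', max_eq_right hs1, min_eq_left hr1]
  have hc01 : ∀ j : ℕ, 0 ≤ min r (max s ((j:ℝ)/(N:ℝ))) ∧ min r (max s ((j:ℝ)/(N:ℝ))) ≤ 1 :=
    fun j => ⟨le_min hr0 (le_trans hs (le_max_left _ _)), le_trans (min_le_left _ _) hr1⟩
  set c : ℕ → ℝ := fun j => min r (max s ((j:ℝ)/(N:ℝ))) with hcdef
  have hcmono' : ∀ j : ℕ, c j ≤ c (j+1) := fun j => hcmono j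
  have hc01' : ∀ j : ℕ, 0 ≤ c j ∧ c j ≤ 1 := fun j => hc01 j
  have hcIcc : ∀ j : ℕ, c j ∈ Icc (0:ℝ) 1 := fun j => ⟨(hc01' j).1, (hc01' j).2⟩
  have hWint : ∀ (a b : ℝ), a ∈ Icc (0:ℝ) 1 → b ∈ Icc (0:ℝ) 1 →
      ∀ (g : ℝ → 𝓗 →L[ℂ] 𝓗), ContinuousOn g (Icc (0:ℝ) 1) →
      IntervalIntegrable
        (fun r' => ((1 : 𝓗 →L[ℂ] 𝓗) - B.projEQ E) * U (H₀ - (E : ℂ) • 1) (τ * (r' - s)) * g r')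
        volume a b := by
    intro a b ha hb g hg
    apply ContinuousOn.intervalIntegrable
    apply ContinuousOn.mul
    · exact (continuous_const.mul (U_cont _ τ s)).continuousOn
    · exact hg.mono (uIcc_subset_Icc ha hb)
  have hsplit : (∫ r' in s..r,
        ((1 : 𝓗 →L[ℂ] 𝓗) - B.projEQ E) * U (H₀ - (E : ℂ) • 1) (τ * (r' - s)) * B'' r')
      = ∑ j ∈ Finset.range N, ∫ r' in (c j)..(c (j+1)),
        ((1 : 𝓗 →L[ℂ] 𝓗) - B.projEQ E) * U (H₀ - (E : ℂ) • 1) (τ * (r' - s)) * B'' r' := by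
    rw [intervalIntegral.sum_integral_adjacent_intervals
      (fun k _ => hWint (c k) (c (k+1)) (hcIcc k) (hcIcc (k+1)) B'' hBcont)]
    rw [show c 0 = s from hc0, show c N = r from hcN]
  rw [hsplit, ContinuousLinearMap.sum_apply]
  have hpiece : ∀ j ∈ Finset.range N,
      ‖((∫ r' in (c j)..(c (j+1)),
          ((1 : 𝓗 →L[ℂ] 𝓗) - B.projEQ E) * U (H₀ - (E : ℂ) • 1) (τ * (r' - s)) * B'' r' :
            𝓗 →L[ℂ] 𝓗)) ψ‖
        < ε' + (2 * C * ‖ψ‖ / (N:ℝ)) * (c (j+1) - c j) := by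
    intro j hj
    have hjN : j < N := Finset.mem_range.mp hj
    by_cases hcc : c j = c (j+1)
    · rw [hcc, intervalIntegral.integral_same]
      simp only [ContinuousLinearMap.zero_apply, norm_zero, sub_self, mul_zero, add_zero]
      exact hε'
    · have hlt : c j < c (j+1) := lt_of_le_of_ne (hcmono' j) hcc
      have hcjr : c j < r := lt_of_lt_of_le hlt (min_le_left _ _)
      have hxr : max s ((j:ℝ)/(N:ℝ)) ≤ r := by
        by_contra hcon
        push_neg at hcon
        have : c j = r := min_eq_left hcon.le
        linarith
      have hcj_eq : c j = max s ((j:ℝ)/(N:ℝ)) := min_eq_right hxr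
      have hsle : s ≤ ((j:ℝ)+1)/(N:ℝ) := by
        by_contra hcon
        push_neg at hcon
        have hj1 : (j:ℝ)/(N:ℝ) ≤ s := by
          have : (j:ℝ)/(N:ℝ) ≤ ((j:ℝ)+1)/(N:ℝ) := by
            apply div_le_div_of_nonneg_right ?_ hN.le
            linarith
          linarith
        have h2 : max s ((j:ℝ)/(N:ℝ)) = s := max_eq_left hj1
        have hcast : ((j+1:ℕ):ℝ) = (j:ℝ)+1 := by push_cast; ring
        have h3 : max s (((j+1:ℕ):ℝ)/(N:ℝ)) = s := by
          rw [hcast]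
          exact max_eq_left hcon.le
        apply hcc
        show min r (max s ((j:ℝ)/(N:ℝ))) = min r (max s (((j+1:ℕ):ℝ)/(N:ℝ)))
        rw [h2, h3]
      have hlow : (j:ℝ)/(N:ℝ) ≤ c j := by rw [hcj_eq]; exact le_max_right _ _
      have hhigh : c (j+1) ≤ ((j:ℝ)+1)/(N:ℝ) := by
        refine le_trans (min_le_right _ _) ?_
        apply max_le hsle
        apply le_of_eq
        push_cast
        ring
      have hjmem : ((j:ℝ)/(N:ℝ)) ∈ Icc (0:ℝ) 1 := by
        constructor
        · positivity
        · rw [div_le_one hN]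
          exact_mod_cast hjN.le
      have hint1 : IntervalIntegrable
          (fun r' => ((1 : 𝓗 →L[ℂ] 𝓗) - B.projEQ E) * U (H₀ - (E : ℂ) • 1) (τ * (r' - s))
            * B'' ((j:ℝ)/(N:ℝ))) volume (c j) (c (j+1)) :=
        hWint _ _ (hcIcc j) (hcIcc (j+1)) _ continuousOn_const
      have hint2 : IntervalIntegrable
          (fun r' => ((1 : 𝓗 →L[ℂ] 𝓗) - B.projEQ E) * U (H₀ - (E : ℂ) • 1) (τ * (r' - s))
            * (B'' r' - B'' ((j:ℝ)/(N:ℝ)))) volume (c j) (c (j+1)) :=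
        hWint _ _ (hcIcc j) (hcIcc (j+1)) _ (hBcont.sub continuousOn_const)
      have hdecomp : (∫ r' in (c j)..(c (j+1)),
            ((1 : 𝓗 →L[ℂ] 𝓗) - B.projEQ E) * U (H₀ - (E : ℂ) • 1) (τ * (r' - s)) * B'' r')
          = (∫ r' in (c j)..(c (j+1)),
              ((1 : 𝓗 →L[ℂ] 𝓗) - B.projEQ E) * U (H₀ - (E : ℂ) • 1) (τ * (r' - s))
                * B'' ((j:ℝ)/(N:ℝ)))
            + ∫ r' in (c j)..(c (j+1)),
              ((1 : 𝓗 →L[ℂ] 𝓗) - B.projEQ E) * U (H₀ - (E : ℂ) • 1) (τ * (r' - s))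
                * (B'' r' - B'' ((j:ℝ)/(N:ℝ))) := by
        rw [← intervalIntegral.integral_add hint1 hint2]
        apply intervalIntegral.integral_congr
        intro x _
        beta_reduce
        noncomm_ring
      rw [hdecomp, ContinuousLinearMap.add_apply]
      refine lt_of_le_of_lt (norm_add_le _ _) ?_
      have hmain : ‖((∫ r' in (c j)..(c (j+1)),
          ((1 : 𝓗 →L[ℂ] 𝓗) - B.projEQ E) * U (H₀ - (E : ℂ) • 1) (τ * (r' - s))
            * B'' ((j:ℝ)/(N:ℝ)) : 𝓗 →L[ℂ] 𝓗)) ψ‖ < ε' := by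
        have hgint : IntervalIntegrable
            (fun r' => ((1 : 𝓗 →L[ℂ] 𝓗) - B.projEQ E) * U (H₀ - (E : ℂ) • 1) (τ * (r' - s)))
            volume (c j) (c (j+1)) :=
          (continuous_const.mul (U_cont _ τ s)).intervalIntegrable _ _
        have hpullR : (∫ r' in (c j)..(c (j+1)),
              ((1 : 𝓗 →L[ℂ] 𝓗) - B.projEQ E) * U (H₀ - (E : ℂ) • 1) (τ * (r' - s))
                * B'' ((j:ℝ)/(N:ℝ)))
            = (∫ r' in (c j)..(c (j+1)),
                ((1 : 𝓗 →L[ℂ] 𝓗) - B.projEQ E) * U (H₀ - (E : ℂ) • 1) (τ * (r' - s)))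
              * B'' ((j:ℝ)/(N:ℝ)) := by
          have h := ((ContinuousLinearMap.mul ℂ (𝓗 →L[ℂ] 𝓗)).flip
            (B'' ((j:ℝ)/(N:ℝ)))).intervalIntegral_comp_comm hgint
          simpa using h
        have hgint2 : IntervalIntegrable
            (fun r' => ((1 : 𝓗 →L[ℂ] 𝓗) - B.projEQ E) * U (H₀ - (E : ℂ) • 1) (τ * (r' - c j)))
            volume (c j) (c (j+1)) :=
          (continuous_const.mul (U_cont _ τ (c j))).intervalIntegrable _ _
        have hfact : (∫ r' in (c j)..(c (j+1)),
              ((1 : 𝓗 →L[ℂ] 𝓗) - B.projEQ E) * U (H₀ - (E : ℂ) • 1) (τ * (r' - s)))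
            = U (H₀ - (E : ℂ) • 1) (τ * (c j - s))
              * ∫ r' in (c j)..(c (j+1)),
                ((1 : 𝓗 →L[ℂ] 𝓗) - B.projEQ E) * U (H₀ - (E : ℂ) • 1) (τ * (r' - c j)) := by
          have h := (ContinuousLinearMap.mul ℂ (𝓗 →L[ℂ] 𝓗)
            (U (H₀ - (E : ℂ) • 1) (τ * (c j - s)))).intervalIntegral_comp_comm hgint2
          simp only [ContinuousLinearMap.mul_apply'] at h
          rw [← h]
          apply intervalIntegral.integral_congr
          intro x _
          have hc1 : Commute ((1 : 𝓗 →L[ℂ] 𝓗) - B.projEQ E)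
              (U (H₀ - (E : ℂ) • 1) (τ * (c j - s))) := commute_one_sub_proj_U B E _
          have harg : τ * (c j - s) + τ * (x - c j) = τ * (x - s) := by ring
          calc ((1 : 𝓗 →L[ℂ] 𝓗) - B.projEQ E) * U (H₀ - (E : ℂ) • 1) (τ * (x - s))
              = ((1 : 𝓗 →L[ℂ] 𝓗) - B.projEQ E)
                  * (U (H₀ - (E : ℂ) • 1) (τ * (c j - s)) * U (H₀ - (E : ℂ) • 1) (τ * (x - c j))) := by
                rw [← U_add, harg]
            _ = (((1 : 𝓗 →L[ℂ] 𝓗) - B.projEQ E) * U (H₀ - (E : ℂ) • 1) (τ * (c j - s)))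
                  * U (H₀ - (E : ℂ) • 1) (τ * (x - c j)) := (mul_assoc _ _ _).symm
            _ = (U (H₀ - (E : ℂ) • 1) (τ * (c j - s)) * (((1 : 𝓗 →L[ℂ] 𝓗) - B.projEQ E)))
                  * U (H₀ - (E : ℂ) • 1) (τ * (x - c j)) := by rw [hc1.eq]
            _ = U (H₀ - (E : ℂ) • 1) (τ * (c j - s))
                  * (((1 : 𝓗 →L[ℂ] 𝓗) - B.projEQ E) * U (H₀ - (E : ℂ) • 1) (τ * (x - c j))) :=
                mul_assoc _ _ _
        rw [hpullR, hfact, ContinuousLinearMap.mul_apply, ContinuousLinearMap.mul_apply,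
          U_norm_apply _ hA'star]
        exact hTf2 j τ
          (le_trans (hT0 (Tf j) (Finset.mem_image_of_mem Tf hj)) (le_trans (le_max_left _ _) hτ))
          (c j) (c (j+1)) (hc01' j).1 (hcmono' j) (hc01' (j+1)).2
      have herr : ‖((∫ r' in (c j)..(c (j+1)),
          ((1 : 𝓗 →L[ℂ] 𝓗) - B.projEQ E) * U (H₀ - (E : ℂ) • 1) (τ * (r' - s))
            * (B'' r' - B'' ((j:ℝ)/(N:ℝ))) : 𝓗 →L[ℂ] 𝓗)) ψ‖
          ≤ (2 * C * ‖ψ‖ / (N:ℝ)) * (c (j+1) - c j) := by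
        refine le_trans (ContinuousLinearMap.le_opNorm _ _) ?_
        have hOp : ‖∫ r' in (c j)..(c (j+1)),
            ((1 : 𝓗 →L[ℂ] 𝓗) - B.projEQ E) * U (H₀ - (E : ℂ) • 1) (τ * (r' - s))
              * (B'' r' - B'' ((j:ℝ)/(N:ℝ)))‖ ≤ (2 * (C / (N:ℝ))) * |c (j+1) - c j| := by
          apply intervalIntegral.norm_integral_le_of_norm_le_const
          intro x hx
          rw [Set.uIoc_of_le (hcmono' j)] at hx
          have hx1 : c j < x := hx.1
          have hx2 : x ≤ c (j+1) := hx.2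
          have hxmem : x ∈ Icc (0:ℝ) 1 := ⟨le_trans (hc01' j).1 hx1.le, le_trans hx2 (hc01' (j+1)).2⟩
          have hMVT : ‖B'' x - B'' ((j:ℝ)/(N:ℝ))‖ ≤ C * ‖x - (j:ℝ)/(N:ℝ)‖ :=
            (convex_Icc (0:ℝ) 1).norm_image_sub_le_of_norm_hasDerivWithin_le hd
              (fun y hy => (hC y hy).2) hjmem hxmem
          have hdistj : ‖x - (j:ℝ)/(N:ℝ)‖ ≤ 1/(N:ℝ) := by
            rw [Real.norm_eq_abs, abs_le]
            have hadd : ((j:ℝ)+1)/(N:ℝ) = (j:ℝ)/(N:ℝ) + 1/(N:ℝ) := by ring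
            constructor
            · have h1N : 0 ≤ 1/(N:ℝ) := by positivity
              linarith [hlow]
            · linarith [hhigh]
          have h1Pn := one_sub_proj_norm_le B E
          have hUn := U_norm_le (H₀ - (E : ℂ) • (1 : 𝓗 →L[ℂ] 𝓗)) hA'star (τ * (x - s))
          calc ‖((1 : 𝓗 →L[ℂ] 𝓗) - B.projEQ E) * U (H₀ - (E : ℂ) • 1) (τ * (x - s))
                * (B'' x - B'' ((j:ℝ)/(N:ℝ)))‖
              ≤ ‖((1 : 𝓗 →L[ℂ] 𝓗) - B.projEQ E) * U (H₀ - (E : ℂ) • 1) (τ * (x - s))‖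
                * ‖B'' x - B'' ((j:ℝ)/(N:ℝ))‖ := norm_mul_le _ _
            _ ≤ (‖(1 : 𝓗 →L[ℂ] 𝓗) - B.projEQ E‖ * ‖U (H₀ - (E : ℂ) • 1) (τ * (x - s))‖)
                * ‖B'' x - B'' ((j:ℝ)/(N:ℝ))‖ :=
                mul_le_mul_of_nonneg_right (norm_mul_le _ _) (norm_nonneg _)
            _ ≤ (2 * 1) * (C * (1/(N:ℝ))) := by
                apply mul_le_mul ?_ ?_ (norm_nonneg _) (by norm_num)
                · exact mul_le_mul h1Pn hUn (norm_nonneg _) (by norm_num)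
                · exact le_trans hMVT (mul_le_mul_of_nonneg_left hdistj hC0)
            _ = 2 * (C / (N:ℝ)) := by ring
        calc ‖∫ r' in (c j)..(c (j+1)),
              ((1 : 𝓗 →L[ℂ] 𝓗) - B.projEQ E) * U (H₀ - (E : ℂ) • 1) (τ * (r' - s))
                * (B'' r' - B'' ((j:ℝ)/(N:ℝ)))‖ * ‖ψ‖
            ≤ ((2 * (C / (N:ℝ))) * |c (j+1) - c j|) * ‖ψ‖ :=
              mul_le_mul_of_nonneg_right hOp (norm_nonneg _)
          _ = (2 * C * ‖ψ‖ / (N:ℝ)) * (c (j+1) - c j) := by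
              rw [abs_of_nonneg (sub_nonneg.mpr (hcmono' j))]
              ring
      exact add_lt_add_of_lt_of_le hmain herr
  refine lt_of_le_of_lt (norm_sum_le _ _) ?_
  have hNne : (Finset.range N).Nonempty := Finset.nonempty_range_iff.mpr (Nat.succ_ne_zero N₀)
  refine lt_of_lt_of_le (Finset.sum_lt_sum_of_nonempty hNne hpiece) ?_
  have hsum2 : ∑ j ∈ Finset.range N, (ε' + (2 * C * ‖ψ‖ / (N:ℝ)) * (c (j+1) - c j))
      = (N:ℝ) * ε' + (2 * C * ‖ψ‖ / (N:ℝ)) * (r - s) := by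
    rw [Finset.sum_add_distrib, Finset.sum_const, Finset.card_range, ← Finset.mul_sum,
      Finset.sum_range_sub (fun j => c j), show c 0 = s from hc0, show c N = r from hcN,
      nsmul_eq_mul]
  rw [hsum2]
  have he' : (N:ℝ) * ε' = ε / 2 := by
    rw [hε'def]
    field_simp
  have h2 : (2 * C * ‖ψ‖ / (N:ℝ)) * (r - s) ≤ 2 * C * ‖ψ‖ / (N:ℝ) := by
    apply mul_le_of_le_one_right (by positivity)
    linarith
  have h3 : 2 * C * ‖ψ‖ / (N:ℝ) ≤ ε / 2 := by
    rw [div_le_div_iff₀ hN (by norm_num)]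
    have h4 : 4 * C * ‖ψ‖ < (N:ℝ) * ε := (div_lt_iff₀ hε).mp hNbig
    nlinarith
  linarith

end Core

end Stmt14Aux

set_option maxHeartbeats 1000000 in
/-- **Strong decay of oscillatory integrals off an eigenvalue.**  Let
`P̄_E = 1 − χ(H₀ = E)`.  Then (i) for every `ψ`,
`sup_{0 ≤ s ≤ r ≤ 1} ‖(∫ₛʳ P̄_E e^{iτ(r'−s)(H₀−E)} dr') ψ‖ → 0` as `τ → ∞`; and
(ii) for any `τ`-independent norm-differentiable family `B'' : [0,1] → B(𝓗)` with bounded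
derivative, `sup_{0 ≤ s ≤ r ≤ 1} ‖(∫ₛʳ P̄_E e^{iτ(r'−s)(H₀−E)} B''(r') dr') ψ‖ → 0`. -/
theorem stmt14
    {𝓗 : Type*} [NormedAddCommGroup 𝓗] [InnerProductSpace ℂ 𝓗] [CompleteSpace 𝓗]
    (H₀ : 𝓗 →L[ℂ] 𝓗) (hH₀ : IsSelfAdjoint H₀)
    (B : BorelFC H₀) (E : ℝ) :
    (∀ ψ : 𝓗, ∀ ε > 0, ∃ T : ℝ, ∀ τ ≥ T, ∀ s r : ℝ, 0 ≤ s → s ≤ r → r ≤ 1 →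
      ‖(∫ r' in s..r, (1 - B.projEQ E) *
          NormedSpace.exp ((Complex.I * τ * (r' - s)) • (H₀ - (E : ℂ) • 1))) ψ‖ < ε) ∧
    (∀ B'' B''d : ℝ → 𝓗 →L[ℂ] 𝓗,
      (∀ r ∈ Icc (0:ℝ) 1, HasDerivWithinAt B'' (B''d r) (Icc (0:ℝ) 1) r) →
      (∃ C : ℝ, ∀ r ∈ Icc (0:ℝ) 1, ‖B'' r‖ ≤ C ∧ ‖B''d r‖ ≤ C) →
      ∀ ψ : 𝓗, ∀ ε > 0, ∃ T : ℝ, ∀ τ ≥ T, ∀ s r : ℝ, 0 ≤ s → s ≤ r → r ≤ 1 →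
        ‖(∫ r' in s..r, (1 - B.projEQ E) *
            NormedSpace.exp ((Complex.I * τ * (r' - s)) • (H₀ - (E : ℂ) • 1)) *
            B'' r') ψ‖ < ε) := by
  have hrw : ∀ τ s r' : ℝ,
      (Complex.I * (τ:ℂ) * ((r':ℂ) - (s:ℂ))) • (H₀ - (E : ℂ) • (1 : 𝓗 →L[ℂ] 𝓗))
        = ((τ * (r' - s) : ℝ) : ℂ) • (Complex.I • (H₀ - (E : ℂ) • 1)) := by
    intro τ s r'
    rw [smul_smul]
    congr 1
    push_cast
    ring
  constructor
  · intro ψ ε hε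
    obtain ⟨T, _, hT2⟩ := Stmt14Aux.core B hH₀ E ψ hε
    refine ⟨T, fun τ hτ s r hs hsr hr1 => ?_⟩
    have h := hT2 τ hτ s r hs hsr hr1
    simp only [hrw]
    exact h
  · intro B'' B''d hd hbd ψ ε hε
    obtain ⟨C, hC⟩ := hbd
    obtain ⟨T, hT⟩ := Stmt14Aux.core2 B hH₀ E B'' B''d hd hC ψ hε
    refine ⟨T, fun τ hτ s r hs hsr hr1 => ?_⟩
    have h := hT τ hτ s r hs hsr hr1
    simp only [hrw]
    exact h
end
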